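/- arXiv:alg-geom/9709017 — 4 statements merged into one kernel-verified Lean document; each statement's English description precedes it below -/
import Mathlib

section
/- Let z₁ < z₂ < z₃ be real numbers and α₁, α₂, α₃ > 0. Define U(t) = |t−z₁|^{α₁} |t−z₂|^{α₂} |t−z₃|^{α₃} and, for i = 1, 2 and the two intervals Δ₁ = [z₁,z₂], Δ₂ = [z₂,z₃], set M_{ij} = ∫_{Δ_j} α_i · U(t)/(t−z_i) dt (where 1/(t−z_i) is the signed rational function). Then det(M) = [Γ(α₁+1)Γ(α₂+1)Γ(α₃+1)/Γ(α₁+α₂+α₃+1)] · (z₂−z₁)^{α₁+α₂} (z₃−z₁)^{α₁+α₃} (z₃−z₂)^{α₂+α₃}. -/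
open MeasureTheory intervalIntegral

open Set in


lemma real_beta (p q : ℝ) (hp : 0 < p) (hq : 0 < q) :
    ∫ x in (0:ℝ)..1, x ^ (p-1) * (1-x) ^ (q-1)
      = Real.Gamma p * Real.Gamma q / Real.Gamma (p+q) := by
  have key := Complex.Gamma_mul_Gamma_eq_betaIntegral (s := (p:ℂ)) (t := (q:ℂ))
    (by simpa using hp) (by simpa using hq)
  have hcast : Complex.betaIntegral (p:ℂ) (q:ℂ)
      = ((∫ x in (0:ℝ)..1, x ^ (p-1) * (1-x) ^ (q-1) : ℝ) : ℂ) := by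
    rw [Complex.betaIntegral, ← intervalIntegral.integral_ofReal]
    refine intervalIntegral.integral_congr fun x hx => ?_
    rw [Set.uIcc_of_le (by norm_num : (0:ℝ) ≤ 1)] at hx
    rw [show ((p:ℂ)-1) = ((p-1 : ℝ) : ℂ) by push_cast; ring,
      show ((q:ℂ)-1) = ((q-1 : ℝ) : ℂ) by push_cast; ring,
      show (1 - (x:ℂ)) = ((1 - x : ℝ) : ℂ) by push_cast; ring,
      ← Complex.ofReal_cpow hx.1, ← Complex.ofReal_cpow (by linarith [hx.2] : 0 ≤ 1 - x)]
    push_cast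
    ring
  rw [hcast, ← Complex.ofReal_add, Complex.Gamma_ofReal, Complex.Gamma_ofReal,
    Complex.Gamma_ofReal, ← Complex.ofReal_mul, ← Complex.ofReal_mul] at key
  have key' : Real.Gamma p * Real.Gamma q
      = Real.Gamma (p+q) * ∫ x in (0:ℝ)..1, x ^ (p-1) * (1-x) ^ (q-1) := by exact_mod_cast key
  have hne : Real.Gamma (p+q) ≠ 0 := (Real.Gamma_pos_of_pos (by linarith)).ne'
  field_simp
  linarith [key']


open Set in


lemma beta_scaled (p q m : ℝ) (hp : 0 < p) (hq : 0 < q) (hm : 0 < m) :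
    ∫ x in Ioo (0:ℝ) m, x ^ (p-1) * (m-x) ^ (q-1)
      = m ^ (p+q-1) * (Real.Gamma p * Real.Gamma q / Real.Gamma (p+q)) := by
  rw [← MeasureTheory.integral_Ioc_eq_integral_Ioo,
    ← intervalIntegral.integral_of_le hm.le]
  have h1 : (∫ y in (0:ℝ)..1, (fun x => x ^ (p-1) * (m-x) ^ (q-1)) (y * m))
      = m⁻¹ • ∫ x in (0:ℝ)..m, x ^ (p-1) * (m-x) ^ (q-1) := by
    simpa using intervalIntegral.integral_comp_mul_right (a := 0) (b := 1)
      (fun x => x ^ (p-1) * (m-x) ^ (q-1)) hm.ne'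
  have h2 : (∫ y in (0:ℝ)..1, (fun x => x ^ (p-1) * (m-x) ^ (q-1)) (y * m))
      = m ^ (p-1) * m ^ (q-1) * ∫ y in (0:ℝ)..1, y ^ (p-1) * (1-y) ^ (q-1) := by
    rw [← intervalIntegral.integral_const_mul]
    refine intervalIntegral.integral_congr fun y hy => ?_
    rw [Set.uIcc_of_le (by norm_num : (0:ℝ) ≤ 1)] at hy
    have h0y : 0 ≤ y := hy.1
    have h1y : 0 ≤ 1 - y := by linarith [hy.2]
    simp only []
    rw [show m - y * m = m * (1 - y) by ring, show y * m = m * y by ring,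
      Real.mul_rpow hm.le h0y, Real.mul_rpow hm.le h1y]
    ring
  have := h1.symm.trans h2
  rw [smul_eq_mul] at this
  have : (∫ x in (0:ℝ)..m, x ^ (p-1) * (m-x) ^ (q-1))
      = m * (m ^ (p-1) * m ^ (q-1) * ∫ y in (0:ℝ)..1, y ^ (p-1) * (1-y) ^ (q-1)) := by
    field_simp at this ⊢; linarith [this]
  rw [this, real_beta p q hp hq]
  rw [show m ^ (p+q-1) = m * m ^ (p-1) * m ^ (q-1) by
    rw [show p+q-1 = 1+(p-1)+(q-1) by ring, Real.rpow_add hm, Real.rpow_add hm, Real.rpow_one]]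
  ring


open Set in


lemma integrableOn_aux {a b : ℝ} (hab : a < b) {p q : ℝ} (hp : -1 < p) (hq : -1 < q)
    {h : ℝ → ℝ} (hh : ContinuousOn h (Set.Icc a b)) :
    IntegrableOn (fun t => (t-a) ^ p * (b-t) ^ q * h t) (Set.Ioo a b) := by
  set m := (a+b)/2 with hm
  have ham : a < m := by simp only [hm]; linarith
  have hmb : m < b := by simp only [hm]; linarith
  have hmeas : ∀ s : Set ℝ, MeasurableSet s → s ⊆ Set.Ioo a b →
      AEStronglyMeasurable (fun t => (t-a) ^ p * (b-t) ^ q * h t)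
        (volume.restrict s) := by
    intro s hs hsub
    have h1 : Measurable (fun t : ℝ => (t-a) ^ p * (b-t) ^ q) := by fun_prop
    exact h1.aestronglyMeasurable.mul
      ((hh.mono (hsub.trans Set.Ioo_subset_Icc_self)).aestronglyMeasurable hs)
  -- part 1 : Ioo a m
  have h1 : IntegrableOn (fun t => (t-a) ^ p * (b-t) ^ q * h t) (Set.Ioo a m) := by
    have hbase : IntegrableOn (fun t => (t-a) ^ p) (Set.Ioo a m) := by
      have := (intervalIntegral.intervalIntegrable_rpow' (a := 0) (b := m - a) hp).comp_sub_right a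
      rw [intervalIntegrable_iff] at this
      simp only [zero_add, sub_add_cancel] at this
      exact this.mono_set (by rw [Set.uIoc_of_le (by linarith)]; exact Set.Ioo_subset_Ioc_self)
    have hcont : ContinuousOn (fun t => (b-t) ^ q * h t) (Set.Icc a m) := by
      refine ContinuousOn.mul (ContinuousOn.rpow_const
        (continuous_const.sub continuous_id).continuousOn ?_) (hh.mono ?_)
      · intro t ht; left; simp only [Set.mem_Icc] at ht; intro hc; nlinarith [ht.2]
      · intro t ht; simp only [Set.mem_Icc] at ht ⊢; exact ⟨ht.1, by linarith [ht.2]⟩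
    obtain ⟨C, hC⟩ := (isCompact_Icc (a := a) (b := m)).exists_bound_of_continuousOn hcont
    refine Integrable.mono' (g := fun t => (t-a) ^ p * C) (hbase.mul_const C)
      (hmeas _ measurableSet_Ioo (fun t ht => ⟨ht.1, lt_trans ht.2 hmb⟩)) ?_
    filter_upwards [ae_restrict_mem measurableSet_Ioo] with t ht
    have h0 : (0:ℝ) ≤ (t-a) ^ p := Real.rpow_nonneg (by linarith [ht.1]) p
    have : ‖(t-a) ^ p * (b-t) ^ q * h t‖ = (t-a) ^ p * ‖(b-t) ^ q * h t‖ := by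
      rw [mul_assoc, norm_mul, Real.norm_of_nonneg h0]
    rw [this]
    exact mul_le_mul_of_nonneg_left (hC t ⟨ht.1.le, ht.2.le⟩) h0
  -- part 2 : Ico m b
  have h2 : IntegrableOn (fun t => (t-a) ^ p * (b-t) ^ q * h t) (Set.Ico m b) := by
    rw [integrableOn_Ico_iff_integrableOn_Ioo]
    have hbase : IntegrableOn (fun t => (b-t) ^ q) (Set.Ioo m b) := by
      have := (intervalIntegral.intervalIntegrable_rpow' (a := 0) (b := b - m) hq).comp_sub_left b
      rw [intervalIntegrable_iff] at this
      simp only [sub_zero, sub_sub_cancel] at this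
      rw [Set.uIoc_comm, Set.uIoc_of_le (by linarith)] at this
      exact this.mono_set Set.Ioo_subset_Ioc_self
    have hcont : ContinuousOn (fun t => (t-a) ^ p * h t) (Set.Icc m b) := by
      refine ContinuousOn.mul (ContinuousOn.rpow_const
        (continuous_id.sub continuous_const).continuousOn ?_) (hh.mono ?_)
      · intro t ht; left; simp only [Set.mem_Icc] at ht; intro hc; nlinarith [ht.1]
      · intro t ht; simp only [Set.mem_Icc] at ht ⊢; exact ⟨by linarith [ht.1], ht.2⟩
    obtain ⟨C, hC⟩ := (isCompact_Icc (a := m) (b := b)).exists_bound_of_continuousOn hcont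
    refine Integrable.mono' (g := fun t => (b-t) ^ q * C) (hbase.mul_const C)
      (hmeas _ measurableSet_Ioo (fun t ht => ⟨lt_trans ham ht.1, ht.2⟩)) ?_
    filter_upwards [ae_restrict_mem measurableSet_Ioo] with t ht
    have h0 : (0:ℝ) ≤ (b-t) ^ q := Real.rpow_nonneg (by linarith [ht.2]) q
    have : ‖(t-a) ^ p * (b-t) ^ q * h t‖ = (b-t) ^ q * ‖(t-a) ^ p * h t‖ := by
      rw [show (t-a) ^ p * (b-t) ^ q * h t = (b-t) ^ q * ((t-a) ^ p * h t) by ring,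
        norm_mul, Real.norm_of_nonneg h0]
    rw [this]
    exact mul_le_mul_of_nonneg_left (hC t ⟨ht.1.le, ht.2.le⟩) h0
  exact (h1.union h2).mono_set (fun t ht => by
    rcases lt_or_ge t m with hlt | hle
    · exact Or.inl ⟨ht.1, hlt⟩
    · exact Or.inr ⟨hle, ht.2⟩)


open Set in


lemma tri_eval (A B C α₁ α₂ α₃ : ℝ) (hA : 0 < A) (hB : 0 < B) (hC : 0 < C)
    (hα₁ : 0 < α₁) (hα₂ : 0 < α₂) (hα₃ : 0 < α₃) :
    ∫ q in {q : ℝ × ℝ | 0 < q.1 ∧ 0 < q.2 ∧ q.1 * B + q.2 * A < A * B * C},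
        q.1 ^ (α₁-1) * ((A*B*C - q.1*B - q.2*A)/C) ^ (α₂-1) * q.2 ^ α₃
      = (A/C) ^ (α₂-1) * (B/A) ^ (α₂+α₃) * (A*C) ^ (α₁+α₂+α₃) *
        (Real.Gamma (α₃+1) * Real.Gamma α₂ / Real.Gamma (α₂+α₃+1)) *
        (Real.Gamma α₁ * Real.Gamma (α₂+α₃+1) / Real.Gamma (α₁+α₂+α₃+1)) := by
  set T : Set (ℝ × ℝ) := {q | 0 < q.1 ∧ 0 < q.2 ∧ q.1 * B + q.2 * A < A * B * C} with hT
  set G : ℝ × ℝ → ℝ := fun q => q.1 ^ (α₁-1) * ((A*B*C - q.1*B - q.2*A)/C) ^ (α₂-1) * q.2 ^ α₃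
    with hG
  have hTopen : IsOpen T := by
    have h3 : Continuous fun q : ℝ × ℝ => q.1 * B + q.2 * A := by fun_prop
    exact IsOpen.inter (isOpen_lt continuous_const continuous_fst) (IsOpen.inter
      (isOpen_lt continuous_const continuous_snd) (isOpen_lt h3 continuous_const))
  have hTmeas : MeasurableSet T := hTopen.measurableSet
  set m : ℝ → ℝ := fun u => B * (A*C - u) / A with hm
  -- section characterisation
  have hsec : ∀ u : ℝ, (fun v => T.indicator G (u, v))
      = if u ∈ Set.Ioo (0:ℝ) (A*C) then (Set.Ioo (0:ℝ) (m u)).indicator (fun v => G (u, v))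
        else 0 := by
    intro u
    funext v
    by_cases hu : u ∈ Set.Ioo (0:ℝ) (A*C)
    · rw [if_pos hu]
      simp only [Set.mem_Ioo] at hu
      by_cases hv : v ∈ Set.Ioo (0:ℝ) (m u)
      · rw [Set.indicator_of_mem hv (fun w => G (u,w)), Set.indicator_of_mem]
        simp only [Set.mem_Ioo] at hv
        refine ⟨hu.1, hv.1, ?_⟩
        have h1 : v < B * (A*C - u) / A := hv.2
        have h2 : v * A < B * (A*C - u) := by
          rw [lt_div_iff₀ hA] at h1; linarith [h1]
        nlinarith [h2]
      · rw [Set.indicator_of_notMem hv (fun w => G (u,w)), Set.indicator_of_notMem]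
        simp only [Set.mem_Ioo, not_and_or, not_lt] at hv
        intro hmem
        obtain ⟨h1, h2, h3⟩ := hmem
        simp only at h1 h2 h3
        rcases hv with h | h
        · exact absurd h2 (not_lt.mpr h)
        · have h' : B * (A*C - u) / A ≤ v := h
          rw [div_le_iff₀ hA] at h'
          nlinarith [h', h3]
    · rw [if_neg hu]
      simp only [Set.mem_Ioo, not_and_or, not_lt] at hu
      rw [Pi.zero_apply, Set.indicator_apply_eq_zero]
      intro hmem
      obtain ⟨h1, h2, h3⟩ := hmem
      simp only at h1 h2 h3
      exfalso
      rcases hu with h | h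
      · exact absurd h1 (not_lt.mpr h)
      · nlinarith [h1, h2, h3, h]
  have hmpos : ∀ u ∈ Set.Ioo (0:ℝ) (A*C), 0 < m u := by
    intro u hu
    simp only [Set.mem_Ioo] at hu
    rw [hm]
    apply div_pos (by nlinarith [hu.2]) hA
  -- rewrite of G on slice
  have hGslice : ∀ u ∈ Set.Ioo (0:ℝ) (A*C), Set.EqOn (fun v => G (u, v))
      (fun v => (v - 0) ^ α₃ * (m u - v) ^ (α₂-1) * (u ^ (α₁-1) * (A/C) ^ (α₂-1)))
      (Set.Ioo 0 (m u)) := by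
    intro u hu v hv
    simp only [Set.mem_Ioo] at hu hv
    have hkey : (A*B*C - u*B - v*A)/C = (A/C) * (m u - v) := by
      rw [hm]; field_simp
    simp only [hG, sub_zero, hkey]
    rw [Real.mul_rpow (by positivity) (by linarith [hv.2])]
    ring
  -- inner integral evaluation
  set K₁ : ℝ := (A/C) ^ (α₂-1) * (B/A) ^ (α₂+α₃) *
    (Real.Gamma (α₃+1) * Real.Gamma α₂ / Real.Gamma (α₂+α₃+1)) with hK₁
  have hinner : ∀ u ∈ Set.Ioo (0:ℝ) (A*C),
      (∫ v, T.indicator G (u, v)) = u ^ (α₁-1) * (A*C - u) ^ (α₂+α₃) * K₁ := by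
    intro u hu
    rw [show (fun v => T.indicator G (u, v)) = _ from hsec u, if_pos hu]
    rw [MeasureTheory.integral_indicator measurableSet_Ioo]
    rw [MeasureTheory.setIntegral_congr_fun measurableSet_Ioo (hGslice u hu)]
    rw [MeasureTheory.integral_mul_const]
    have := beta_scaled (α₃+1) α₂ (m u) (by linarith) hα₂ (hmpos u hu)
    simp only [add_sub_cancel_right] at this
    simp only [sub_zero]
    rw [this]
    have hmu : m u ^ (α₃+1+α₂-1) = (B/A) ^ (α₂+α₃) * (A*C-u) ^ (α₂+α₃) := by
      have hmu' : m u = (B/A) * (A*C - u) := by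
        show B * (A*C - u) / A = _; ring
      rw [hmu', Real.mul_rpow (by positivity)
          (by simp only [Set.mem_Ioo] at hu; linarith [hu.2]),
        show α₃+1+α₂-1 = α₂+α₃ by ring]
    rw [hmu, hK₁]
    ring
  have hzero : ∀ u ∉ Set.Ioo (0:ℝ) (A*C), (fun v => T.indicator G (u, v)) = 0 := by
    intro u hu
    rw [show (fun v => T.indicator G (u, v)) = _ from hsec u, if_neg hu]
  -- nonnegativity
  have hGnonneg : ∀ q : ℝ × ℝ, 0 ≤ T.indicator G q := by
    intro q
    apply Set.indicator_nonneg
    intro x hx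
    obtain ⟨h1, h2, h3⟩ := hx
    have : (0:ℝ) ≤ (A*B*C - x.1*B - x.2*A)/C := by
      apply div_nonneg _ hC.le
      linarith [h3]
    positivity
  -- measurability of G
  have hGmeas : AEStronglyMeasurable (T.indicator G) (volume : Measure (ℝ × ℝ)) := by
    refine (Measurable.indicator ?_ hTmeas).aestronglyMeasurable
    fun_prop
  -- slice integrability
  have hslice : ∀ u : ℝ, Integrable (fun v => T.indicator G (u, v)) := by
    intro u
    by_cases hu : u ∈ Set.Ioo (0:ℝ) (A*C)
    · rw [show (fun v => T.indicator G (u, v)) = _ from hsec u, if_pos hu]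
      rw [integrable_indicator_iff measurableSet_Ioo]
      refine IntegrableOn.congr_fun ?_ (fun v hv => (hGslice u hu hv).symm) measurableSet_Ioo
      exact integrableOn_aux (hmpos u hu) (by linarith) (by linarith) continuousOn_const
    · rw [hzero u hu]
      exact integrable_zero _ _ _
  -- integral of norms / outer function
  have houter : (fun u => ∫ v, T.indicator G (u, v))
      = (Set.Ioo (0:ℝ) (A*C)).indicator
          (fun u => (u - 0) ^ (α₁-1) * (A*C - u) ^ (α₂+α₃) * K₁) := by
    funext u
    by_cases hu : u ∈ Set.Ioo (0:ℝ) (A*C)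
    · rw [Set.indicator_of_mem hu, hinner u hu, sub_zero]
    · rw [Set.indicator_of_notMem hu, hzero u hu]
      simp
  have houter_int : Integrable (fun u => ∫ v, T.indicator G (u, v)) := by
    rw [houter]
    rw [integrable_indicator_iff measurableSet_Ioo]
    exact integrableOn_aux (by positivity) (by linarith) (by linarith) continuousOn_const
  -- Fubini
  have hint : Integrable (T.indicator G) (volume : Measure (ℝ × ℝ)) := by
    rw [MeasureTheory.Measure.volume_eq_prod] at hGmeas ⊢
    rw [MeasureTheory.integrable_prod_iff hGmeas]
    constructor
    · exact Filter.Eventually.of_forall hslice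
    · have : (fun u => ∫ v, ‖T.indicator G (u, v)‖) = (fun u => ∫ v, T.indicator G (u, v)) := by
        funext u
        congr 1
        funext v
        exact Real.norm_of_nonneg (hGnonneg (u, v))
      rw [this]
      exact houter_int
  calc ∫ q in T, G q = ∫ q, T.indicator G q := by
        rw [MeasureTheory.integral_indicator hTmeas]
    _ = ∫ u, ∫ v, T.indicator G (u, v) := by
        rw [MeasureTheory.Measure.volume_eq_prod] at hint ⊢
        exact MeasureTheory.integral_prod _ hint
    _ = ∫ u in Set.Ioo (0:ℝ) (A*C), (u - 0) ^ (α₁-1) * (A*C - u) ^ (α₂+α₃) * K₁ := by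
        rw [houter, MeasureTheory.integral_indicator measurableSet_Ioo]
    _ = (A/C) ^ (α₂-1) * (B/A) ^ (α₂+α₃) * (A*C) ^ (α₁+α₂+α₃) *
        (Real.Gamma (α₃+1) * Real.Gamma α₂ / Real.Gamma (α₂+α₃+1)) *
        (Real.Gamma α₁ * Real.Gamma (α₂+α₃+1) / Real.Gamma (α₁+α₂+α₃+1)) := by
        rw [MeasureTheory.integral_mul_const]
        have := beta_scaled α₁ (α₂+α₃+1) (A*C) hα₁ (by linarith) (by positivity)
        simp only [sub_zero]
        rw [show α₁+(α₂+α₃+1)-1 = α₁+α₂+α₃ by ring,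
          show α₁+(α₂+α₃+1) = α₁+α₂+α₃+1 by ring, add_sub_cancel_right] at this
        rw [this, hK₁]
        ring


open Set in



private noncomputable def fmap (z₁ z₃ : ℝ) : ℝ × ℝ → ℝ × ℝ :=
  fun p => ((p.1 - z₁) * (p.2 - z₁), (z₃ - p.1) * (z₃ - p.2))

private noncomputable def fder (z₁ z₃ : ℝ) (p : ℝ × ℝ) : ℝ × ℝ →L[ℝ] ℝ × ℝ :=
  LinearMap.toContinuousLinearMap (Matrix.toLin (Module.Basis.finTwoProd ℝ) (Module.Basis.finTwoProd ℝ)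
    !![p.2 - z₁, p.1 - z₁; p.2 - z₃, p.1 - z₃])

lemma hasFDerivAt_fmap (z₁ z₃ : ℝ) (p : ℝ × ℝ) :
    HasFDerivAt (fmap z₁ z₃) (fder z₁ z₃ p) p := by
  rw [fder, Matrix.toLin_finTwoProd_toContinuousLinearMap]
  convert HasFDerivAt.prodMk (𝕜 := ℝ)
    ((hasFDerivAt_fst.sub_const z₁).mul (hasFDerivAt_snd.sub_const z₁))
    (((hasFDerivAt_const z₃ p).sub hasFDerivAt_fst).mul
      ((hasFDerivAt_const z₃ p).sub hasFDerivAt_snd)) using 2 <;>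
  · ext v <;>
    simp [fmap] <;> ring

lemma fder_det (z₁ z₃ : ℝ) (p : ℝ × ℝ) :
    (fder z₁ z₃ p).det = (p.1 - p.2) * (z₃ - z₁) := by
  simp only [fder, LinearMap.det_toContinuousLinearMap, LinearMap.det_toLin,
    Matrix.det_fin_two_of]
  ring

open Set in
lemma fmap_inj {z₁ z₂ z₃ : ℝ} (h₁₂ : z₁ < z₂) (h₂₃ : z₂ < z₃) :
    Set.InjOn (fmap z₁ z₃) (Set.Ioo z₁ z₂ ×ˢ Set.Ioo z₂ z₃) := by
  rintro ⟨t, s⟩ ⟨ht, hs⟩ ⟨t', s'⟩ ⟨ht', hs'⟩ heq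
  simp only [fmap, Prod.mk.injEq] at heq
  obtain ⟨e1, e2⟩ := heq
  simp only [Set.mem_Ioo] at ht hs ht' hs'
  have h0 : (z₃ - z₁) * ((t + s) - (t' + s')) = 0 := by linear_combination e1 - e2
  have hsum : t + s = t' + s' := by
    rcases mul_eq_zero.mp h0 with h | h
    · exfalso; linarith
    · linarith
  have hprod : t * s = t' * s' := by linear_combination e1 + z₁ * hsum
  have htt : (t - t') * (t - s') = 0 := by linear_combination t * hsum - hprod
  have ht1 : t ≠ s' := by intro h; rw [h] at ht; linarith [ht.2, hs'.1]
  have htt' : t = t' := by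
    rcases mul_eq_zero.mp htt with h | h
    · linarith
    · exact absurd (by linarith : t = s') ht1
  refine Prod.ext htt' ?_
  simp only
  linarith

lemma fmap_image {z₁ z₂ z₃ : ℝ} (h₁₂ : z₁ < z₂) (h₂₃ : z₂ < z₃) :
    fmap z₁ z₃ '' (Set.Ioo z₁ z₂ ×ˢ Set.Ioo z₂ z₃)
      = {q : ℝ × ℝ | 0 < q.1 ∧ 0 < q.2 ∧
          q.1 * (z₃ - z₂) + q.2 * (z₂ - z₁) < (z₂ - z₁) * (z₃ - z₂) * (z₃ - z₁)} := by
  have hC : (0:ℝ) < z₃ - z₁ := by linarith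
  ext ⟨u, v⟩
  constructor
  · rintro ⟨⟨t, s⟩, ⟨ht, hs⟩, heq⟩
    simp only [fmap, Prod.mk.injEq] at heq
    simp only [Set.mem_Ioo] at ht hs
    obtain ⟨hu, hv⟩ := heq
    refine ⟨?_, ?_, ?_⟩
    · rw [← hu]; exact mul_pos (by linarith [ht.1]) (by linarith [hs.1])
    · rw [← hv]; exact mul_pos (by linarith [ht.2]) (by linarith [hs.2])
    · have key : u * (z₃ - z₂) + v * (z₂ - z₁)
          = (z₂ - z₁) * (z₃ - z₂) * (z₃ - z₁) - (z₂ - t) * (s - z₂) * (z₃ - z₁) := by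
        rw [← hu, ← hv]; ring
      rw [key]
      have : 0 < (z₂ - t) * (s - z₂) * (z₃ - z₁) :=
        mul_pos (mul_pos (by linarith [ht.2]) (by linarith [hs.1])) hC
      linarith
  · rintro ⟨hu, hv, hw⟩
    simp only [Set.mem_setOf_eq] at hu hv hw
    set P : ℝ := z₁ + z₃ + (u - v) / (z₃ - z₁) with hP
    set Q : ℝ → ℝ := fun x => x ^ 2 - P * x + (u - z₁ ^ 2 + P * z₁) with hQ
    have hQz₁ : Q z₁ = u := by simp only [hQ]; ring
    have hQz₃ : Q z₃ = v := by
      simp only [hQ, hP]; field_simp; ring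
    have hQz₂ : Q z₂ = -(((z₂ - z₁) * (z₃ - z₂) * (z₃ - z₁) - u * (z₃ - z₂) - v * (z₂ - z₁))
        / (z₃ - z₁)) := by
      simp only [hQ, hP]; field_simp; ring
    have hQz₂neg : Q z₂ < 0 := by
      rw [hQz₂, neg_lt, neg_zero]
      apply div_pos (by linarith) hC
    have hQcont : Continuous Q := by simp only [hQ]; continuity
    have hT : ∃ t ∈ Set.Ioo z₁ z₂, Q t = 0 := by
      have key := intermediate_value_Ioo' (le_of_lt h₁₂) hQcont.continuousOn
      have h0 : (0:ℝ) ∈ Set.Ioo (Q z₂) (Q z₁) := ⟨hQz₂neg, by rw [hQz₁]; exact hu⟩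
      obtain ⟨t, ht, hQt⟩ := key h0
      exact ⟨t, ht, hQt⟩
    have hS : ∃ s ∈ Set.Ioo z₂ z₃, Q s = 0 := by
      have key := intermediate_value_Ioo (le_of_lt h₂₃) hQcont.continuousOn
      have h0 : (0:ℝ) ∈ Set.Ioo (Q z₂) (Q z₃) := ⟨hQz₂neg, by rw [hQz₃]; exact hv⟩
      obtain ⟨s, hs, hQs⟩ := key h0
      exact ⟨s, hs, hQs⟩
    obtain ⟨t, ht, hQt⟩ := hT
    obtain ⟨s, hs, hQs⟩ := hS
    simp only [Set.mem_Ioo] at ht hs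
    have hts : t ≠ s := by intro h; rw [h] at ht; linarith [ht.2, hs.1]
    simp only [hQ] at hQt hQs
    have h2 : (t - s) * (t + s - P) = 0 := by linear_combination hQt - hQs
    have hsum : P = t + s := by
      rcases mul_eq_zero.mp h2 with h | h
      · exact absurd (by linarith : t = s) hts
      · linarith
    have hprod : u - z₁ ^ 2 + P * z₁ = t * s := by linear_combination hQt + t * hsum
    have hQz₃' : z₃ ^ 2 - P * z₃ + (u - z₁ ^ 2 + P * z₁) = v := by
      have := hQz₃; simp only [hQ] at this; linarith
    refine ⟨(t, s), ⟨Set.mem_Ioo.mpr ht, Set.mem_Ioo.mpr hs⟩, ?_⟩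
    simp only [fmap, Prod.mk.injEq]
    constructor
    · linear_combination z₁ * hsum - hprod
    · linear_combination hQz₃' + z₃ * hsum - hprod


open Set in

open Set in
lemma cov {z₁ z₂ z₃ : ℝ} (h₁₂ : z₁ < z₂) (h₂₃ : z₂ < z₃) (g : ℝ × ℝ → ℝ) :
    ∫ q in {q : ℝ × ℝ | 0 < q.1 ∧ 0 < q.2 ∧
        q.1 * (z₃ - z₂) + q.2 * (z₂ - z₁) < (z₂ - z₁) * (z₃ - z₂) * (z₃ - z₁)}, g q
      = ∫ p in Set.Ioo z₁ z₂ ×ˢ Set.Ioo z₂ z₃,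
          ((z₃ - z₁) * (p.2 - p.1)) * g (fmap z₁ z₃ p) := by
  rw [← fmap_image h₁₂ h₂₃]
  rw [integral_image_eq_integral_abs_det_fderiv_smul volume
    (measurableSet_Ioo.prod measurableSet_Ioo)
    (fun p _ => (hasFDerivAt_fmap z₁ z₃ p).hasFDerivWithinAt) (fmap_inj h₁₂ h₂₃) g]
  refine setIntegral_congr_fun (measurableSet_Ioo.prod measurableSet_Ioo) (fun p hp => ?_)
  rw [fder_det]
  rw [Set.mem_prod] at hp
  obtain ⟨hp1, hp2⟩ := hp
  simp only [Set.mem_Ioo] at hp1 hp2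
  rw [abs_of_neg (by nlinarith [hp1.2, hp2.1, hp1.1, hp2.2] :
    (p.1 - p.2) * (z₃ - z₁) < 0), smul_eq_mul]
  ring_nf


open Set in



private lemma rpow_split {x : ℝ} (hx : 0 < x) (α : ℝ) : x ^ α = x ^ (α - 1) * x := by
  have := Real.rpow_add_one hx.ne' (α - 1)
  rwa [sub_add_cancel] at this

/-- Determinant of the 2×2 hypergeometric period matrix for three points on a line. -/
theorem det_period_matrix_three_points (z₁ z₂ z₃ α₁ α₂ α₃ : ℝ)
    (h₁₂ : z₁ < z₂) (h₂₃ : z₂ < z₃)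
    (hα₁ : 0 < α₁) (hα₂ : 0 < α₂) (hα₃ : 0 < α₃) :
    let U : ℝ → ℝ := fun t => |t - z₁| ^ α₁ * |t - z₂| ^ α₂ * |t - z₃| ^ α₃
    Matrix.det
      !![∫ t in z₁..z₂, α₁ * U t / (t - z₁), ∫ t in z₂..z₃, α₁ * U t / (t - z₁);
         ∫ t in z₁..z₂, α₂ * U t / (t - z₂), ∫ t in z₂..z₃, α₂ * U t / (t - z₂)] =
      Real.Gamma (α₁ + 1) * Real.Gamma (α₂ + 1) * Real.Gamma (α₃ + 1) /
          Real.Gamma (α₁ + α₂ + α₃ + 1) *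
        ((z₂ - z₁) ^ (α₁ + α₂) * (z₃ - z₁) ^ (α₁ + α₃) * (z₃ - z₂) ^ (α₂ + α₃)) := by
  intro U
  have h₁₃ : z₁ < z₃ := h₁₂.trans h₂₃
  set L1 : ℝ → ℝ := fun t => (t-z₁) ^ (α₁-1) * (z₂-t) ^ α₂ * (z₃-t) ^ α₃ with hL1
  set L2 : ℝ → ℝ := fun t => (t-z₁) ^ α₁ * (z₂-t) ^ (α₂-1) * (z₃-t) ^ α₃ with hL2
  set R1 : ℝ → ℝ := fun s => (s-z₂) ^ α₂ * (z₃-s) ^ α₃ * (s-z₁) ^ (α₁-1) with hR1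
  set R2 : ℝ → ℝ := fun s => (s-z₂) ^ (α₂-1) * (z₃-s) ^ α₃ * (s-z₁) ^ α₁ with hR2
  -- Step 1 : rewrite the four entries
  have hM11 : (∫ t in z₁..z₂, α₁ * U t / (t - z₁))
      = α₁ * ∫ t in Set.Ioo z₁ z₂, L1 t := by
    rw [intervalIntegral.integral_of_le h₁₂.le, MeasureTheory.integral_Ioc_eq_integral_Ioo,
      ← MeasureTheory.integral_const_mul]
    refine setIntegral_congr_fun measurableSet_Ioo (fun t ht => ?_)
    obtain ⟨ht1, ht2⟩ := ht
    have e1 : |t - z₁| = t - z₁ := abs_of_pos (by linarith)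
    have e2 : |t - z₂| = z₂ - t := by rw [abs_of_neg (by linarith : t - z₂ < 0)]; ring
    have e3 : |t - z₃| = z₃ - t := by rw [abs_of_neg (by linarith : t - z₃ < 0)]; ring
    simp only [U, e1, e2, e3, hL1]
    rw [rpow_split (by linarith : (0:ℝ) < t - z₁) α₁]
    have hne : t - z₁ ≠ 0 := by intro h; nlinarith [h]
    field_simp
  have hM21 : (∫ t in z₁..z₂, α₂ * U t / (t - z₂))
      = -(α₂ * ∫ t in Set.Ioo z₁ z₂, L2 t) := by
    rw [intervalIntegral.integral_of_le h₁₂.le, MeasureTheory.integral_Ioc_eq_integral_Ioo,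
      ← MeasureTheory.integral_const_mul, ← MeasureTheory.integral_neg]
    refine setIntegral_congr_fun measurableSet_Ioo (fun t ht => ?_)
    obtain ⟨ht1, ht2⟩ := ht
    have e1 : |t - z₁| = t - z₁ := abs_of_pos (by linarith)
    have e2 : |t - z₂| = z₂ - t := by rw [abs_of_neg (by linarith : t - z₂ < 0)]; ring
    have e3 : |t - z₃| = z₃ - t := by rw [abs_of_neg (by linarith : t - z₃ < 0)]; ring
    simp only [U, e1, e2, e3, hL2]
    rw [rpow_split (by linarith : (0:ℝ) < z₂ - t) α₂]
    have hne : t - z₂ ≠ 0 := by intro h; linarith [h]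
    field_simp
    ring
  have hM12 : (∫ s in z₂..z₃, α₁ * U s / (s - z₁))
      = α₁ * ∫ s in Set.Ioo z₂ z₃, R1 s := by
    rw [intervalIntegral.integral_of_le h₂₃.le, MeasureTheory.integral_Ioc_eq_integral_Ioo,
      ← MeasureTheory.integral_const_mul]
    refine setIntegral_congr_fun measurableSet_Ioo (fun s hs => ?_)
    obtain ⟨hs1, hs2⟩ := hs
    have e1 : |s - z₁| = s - z₁ := abs_of_pos (by linarith)
    have e2 : |s - z₂| = s - z₂ := abs_of_pos (by linarith)
    have e3 : |s - z₃| = z₃ - s := by rw [abs_of_neg (by linarith : s - z₃ < 0)]; ring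
    simp only [U, e1, e2, e3, hR1]
    rw [rpow_split (by linarith : (0:ℝ) < s - z₁) α₁]
    have hne : s - z₁ ≠ 0 := by intro h; nlinarith [h]
    field_simp
  have hM22 : (∫ s in z₂..z₃, α₂ * U s / (s - z₂))
      = α₂ * ∫ s in Set.Ioo z₂ z₃, R2 s := by
    rw [intervalIntegral.integral_of_le h₂₃.le, MeasureTheory.integral_Ioc_eq_integral_Ioo,
      ← MeasureTheory.integral_const_mul]
    refine setIntegral_congr_fun measurableSet_Ioo (fun s hs => ?_)
    obtain ⟨hs1, hs2⟩ := hs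
    have e1 : |s - z₁| = s - z₁ := abs_of_pos (by linarith)
    have e2 : |s - z₂| = s - z₂ := abs_of_pos (by linarith)
    have e3 : |s - z₃| = z₃ - s := by rw [abs_of_neg (by linarith : s - z₃ < 0)]; ring
    simp only [U, e1, e2, e3, hR2]
    rw [rpow_split (by linarith : (0:ℝ) < s - z₂) α₂]
    have hne : s - z₂ ≠ 0 := by intro h; nlinarith [h]
    field_simp
  rw [Matrix.det_fin_two_of, hM11, hM21, hM12, hM22]
  -- Step 2 : integrability of the four 1-D integrands
  have hcontR : ContinuousOn (fun s : ℝ => (s - z₁) ^ α₁) (Set.Icc z₂ z₃) := by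
    refine ContinuousOn.rpow_const (by fun_prop) (fun s hs => Or.inl ?_)
    obtain ⟨hs1, hs2⟩ := hs; intro h; nlinarith [h]
  have hcontR' : ContinuousOn (fun s : ℝ => (s - z₁) ^ (α₁-1)) (Set.Icc z₂ z₃) := by
    refine ContinuousOn.rpow_const (by fun_prop) (fun s hs => Or.inl ?_)
    obtain ⟨hs1, hs2⟩ := hs; intro h; nlinarith [h]
  have hcontL : ContinuousOn (fun t : ℝ => (z₃ - t) ^ α₃) (Set.Icc z₁ z₂) := by
    refine ContinuousOn.rpow_const (by fun_prop) (fun t ht => Or.inl ?_)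
    obtain ⟨ht1, ht2⟩ := ht; intro h; nlinarith [h]
  have hintL1 : IntegrableOn L1 (Set.Ioo z₁ z₂) :=
    integrableOn_aux h₁₂ (by linarith) (by linarith) hcontL
  have hintL2 : IntegrableOn L2 (Set.Ioo z₁ z₂) :=
    integrableOn_aux h₁₂ (by linarith) (by linarith) hcontL
  have hintR1 : IntegrableOn R1 (Set.Ioo z₂ z₃) := by
    have := integrableOn_aux h₂₃ (by linarith : (-1:ℝ) < α₂ - 1 + 1) (by linarith : (-1:ℝ) < α₃)
      hcontR'
    refine this.congr_fun (fun s hs => ?_) measurableSet_Ioo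
    simp only [hR1, sub_add_cancel]
  have hintR2 : IntegrableOn R2 (Set.Ioo z₂ z₃) := by
    have := integrableOn_aux h₂₃ (by linarith : (-1:ℝ) < α₂ - 1) (by linarith : (-1:ℝ) < α₃)
      hcontR
    exact this.congr_fun (fun s hs => by simp only [hR2]) measurableSet_Ioo
  -- Step 3 : products of integrals as double integrals
  set S : Set (ℝ × ℝ) := Set.Ioo z₁ z₂ ×ˢ Set.Ioo z₂ z₃ with hS
  have hprod : ∀ (F G : ℝ → ℝ), (∫ t in Set.Ioo z₁ z₂, F t) * (∫ s in Set.Ioo z₂ z₃, G s)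
      = ∫ p in S, F p.1 * G p.2 := by
    intro F G
    rw [hS, MeasureTheory.Measure.volume_eq_prod, ← MeasureTheory.Measure.prod_restrict,
      MeasureTheory.integral_prod_mul]
  have hdet : (α₁ * ∫ t in Set.Ioo z₁ z₂, L1 t) * (α₂ * ∫ s in Set.Ioo z₂ z₃, R2 s)
      - (α₁ * ∫ s in Set.Ioo z₂ z₃, R1 s) * -(α₂ * ∫ t in Set.Ioo z₁ z₂, L2 t)
      = α₁ * α₂ * (∫ p in S, (L1 p.1 * R2 p.2 + L2 p.1 * R1 p.2)) := by
    rw [MeasureTheory.integral_add]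
    · rw [← hprod L1 R2, ← hprod L2 R1]; ring
    · rw [hS, MeasureTheory.Measure.volume_eq_prod, ← MeasureTheory.Measure.prod_restrict]
      exact MeasureTheory.Integrable.mul_prod hintL1 hintR2
    · rw [hS, MeasureTheory.Measure.volume_eq_prod, ← MeasureTheory.Measure.prod_restrict]
      exact MeasureTheory.Integrable.mul_prod hintL2 hintR1
  rw [hdet]
  -- Step 4 : pointwise kernel identity on S
  set A : ℝ := z₂ - z₁ with hA
  set B : ℝ := z₃ - z₂ with hB
  set C : ℝ := z₃ - z₁ with hC
  have hApos : 0 < A := by rw [hA]; linarith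
  have hBpos : 0 < B := by rw [hB]; linarith
  have hCpos : 0 < C := by rw [hC]; linarith
  set G : ℝ × ℝ → ℝ :=
    fun q => q.1 ^ (α₁-1) * ((A*B*C - q.1*B - q.2*A)/C) ^ (α₂-1) * q.2 ^ α₃ with hG
  have hker : ∀ p ∈ S, L1 p.1 * R2 p.2 + L2 p.1 * R1 p.2
      = (A/C) * (((z₃ - z₁) * (p.2 - p.1)) * G (fmap z₁ z₃ p)) := by
    rintro ⟨t, s⟩ hp
    rw [Set.mem_prod] at hp
    obtain ⟨hpt, hps⟩ := hp
    simp only [Set.mem_Ioo] at hpt hps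
    have h1 : (0:ℝ) < t - z₁ := by linarith [hpt.1]
    have h2 : (0:ℝ) < z₂ - t := by linarith [hpt.2]
    have h3 : (0:ℝ) < z₃ - t := by linarith [hpt.2]
    have h4 : (0:ℝ) < s - z₁ := by linarith [hps.1]
    have h5 : (0:ℝ) < s - z₂ := by linarith [hps.1]
    have h6 : (0:ℝ) < z₃ - s := by linarith [hps.2]
    have hkey : (A*B*C - ((t-z₁)*(s-z₁))*B - ((z₃-t)*(z₃-s))*A)/C = (z₂-t)*(s-z₂) := by
      rw [hA, hB, hC]; field_simp [(sub_pos.mpr h₁₃).ne']; ring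
    simp only [hG, fmap, hkey]
    rw [Real.mul_rpow h1.le h4.le, Real.mul_rpow h2.le h5.le, Real.mul_rpow h3.le h6.le]
    simp only [hL1, hL2, hR1, hR2]
    rw [rpow_split h1 α₁, rpow_split h2 α₂, rpow_split h4 α₁, rpow_split h5 α₂]
    rw [hA, hC]
    field_simp [(sub_pos.mpr h₁₃).ne']
    ring
  rw [setIntegral_congr_fun (measurableSet_Ioo.prod measurableSet_Ioo) hker,
    MeasureTheory.integral_const_mul, ← cov h₁₂ h₂₃ G]
  -- Step 5 : evaluate the triangle integral
  have htri := tri_eval A B C α₁ α₂ α₃ hApos hBpos hCpos hα₁ hα₂ hα₃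
  rw [show {q : ℝ × ℝ | 0 < q.1 ∧ 0 < q.2 ∧
      q.1 * (z₃ - z₂) + q.2 * (z₂ - z₁) < (z₂ - z₁) * (z₃ - z₂) * (z₃ - z₁)}
      = {q : ℝ × ℝ | 0 < q.1 ∧ 0 < q.2 ∧ q.1 * B + q.2 * A < A * B * C} by
    rw [hA, hB, hC]]
  rw [← hG] at htri
  rw [htri]
  -- Step 6 : arithmetic
  have hGam1 : Real.Gamma (α₁ + 1) = α₁ * Real.Gamma α₁ := Real.Gamma_add_one hα₁.ne'
  have hGam2 : Real.Gamma (α₂ + 1) = α₂ * Real.Gamma α₂ := Real.Gamma_add_one hα₂.ne'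
  have hGne1 : Real.Gamma (α₂+α₃+1) ≠ 0 := (Real.Gamma_pos_of_pos (by linarith)).ne'
  have hGne2 : Real.Gamma (α₁+α₂+α₃+1) ≠ 0 := (Real.Gamma_pos_of_pos (by linarith)).ne'
  have hpow : A ^ (α₁+α₂) * C ^ (α₁+α₃) * B ^ (α₂+α₃)
      = (A/C) * ((A/C) ^ (α₂-1) * (B/A) ^ (α₂+α₃) * (A*C) ^ (α₁+α₂+α₃)) := by
    have e1 : (A/C) ^ (α₂-1) = A ^ (α₂-1) / C ^ (α₂-1) := Real.div_rpow hApos.le hCpos.le _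
    have e2 : (B/A) ^ (α₂+α₃) = B ^ (α₂+α₃) / A ^ (α₂+α₃) := Real.div_rpow hBpos.le hApos.le _
    have e3 : (A*C) ^ (α₁+α₂+α₃) = A ^ (α₁+α₂+α₃) * C ^ (α₁+α₂+α₃) :=
      Real.mul_rpow hApos.le hCpos.le
    have cA : A ^ (α₁+α₂) * A ^ (α₂+α₃) = A ^ α₂ * A ^ (α₁+α₂+α₃) := by
      rw [← Real.rpow_add hApos, ← Real.rpow_add hApos]; congr 1; ring
    have cC : C ^ (α₁+α₃) * C ^ α₂ = C ^ (α₁+α₂+α₃) := by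
      rw [← Real.rpow_add hCpos]; congr 1; ring
    have sA : A ^ α₂ = A ^ (α₂-1) * A := rpow_split hApos α₂
    have sC : C ^ α₂ = C ^ (α₂-1) * C := rpow_split hCpos α₂
    have nA : A ^ (α₂+α₃) ≠ 0 := (Real.rpow_pos_of_pos hApos _).ne'
    have nC : C ^ (α₂-1) ≠ 0 := (Real.rpow_pos_of_pos hCpos _).ne'
    rw [e1, e2, e3]
    clear_value A B C
    field_simp
    linear_combination ( -(A ^ (α₁+α₂) * A ^ (α₂+α₃)) * C ^ (α₁+α₃) * sC
      + (A ^ (α₁+α₂) * A ^ (α₂+α₃)) * cC + C ^ (α₁+α₂+α₃) * cA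
      + C ^ (α₁+α₂+α₃) * A ^ (α₁+α₂+α₃) * sA )
  rw [hGam1, hGam2, hpow]
  field_simp
end

section
/- Let z₁ < z₂ be real numbers, α₁, α₂ > 0, and a > 0. Define U(t) = |t−z₁|^{α₁} |t−z₂|^{α₂} and, for the domains Δ₁ = [z₁,z₂], Δ₂ = [z₂,∞), set M_{ij} = ∫_{Δ_j} e^{−a t} α_i · U(t)/(t−z_i) dt (with 1/(t−z_i) the signed rational function). Then det(M) = Γ(α₁+1) Γ(α₂+1) e^{−a(z₁+z₂)} a^{−(α₁+α₂)} (z₂−z₁)^{α₁+α₂}. -/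
open MeasureTheory intervalIntegral Real Set

-- beta-type integrability
lemma aux_beta_integrable {p q : ℝ} (hp : 0 < p) (hq : 0 < q) :
    IntegrableOn (fun x : ℝ => x ^ (p-1) * (1 - x) ^ (q-1)) (Ioo (0:ℝ) 1) := by
  have h := (Complex.betaIntegral_convergent (u := p) (v := q) (by simpa using hp)
    (by simpa using hq)).norm
  rw [intervalIntegrable_iff_integrableOn_Ioo_of_le zero_le_one] at h
  refine (IntegrableOn.congr_fun h ?_ measurableSet_Ioo)
  intro x hx
  simp only [norm_mul]
  rw [
    Complex.norm_cpow_eq_rpow_re_of_pos hx.1,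
    (by push_cast; ring_nf : (1:ℂ) - (x:ℂ) = ((1 - x : ℝ) : ℂ)),
    Complex.norm_cpow_eq_rpow_re_of_pos (by linarith [hx.2])]
  norm_num

-- real Beta identity
lemma aux_beta_gamma {p q : ℝ} (hp : 0 < p) (hq : 0 < q) :
    Real.Gamma p * Real.Gamma q =
      Real.Gamma (p + q) * ∫ x in Ioo (0:ℝ) 1, x ^ (p-1) * (1 - x) ^ (q-1) := by
  have h := Complex.Gamma_mul_Gamma_eq_betaIntegral (s := p) (t := q)
    (by simpa using hp) (by simpa using hq)
  have hbeta : Complex.betaIntegral p q =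
      ((∫ x in Ioo (0:ℝ) 1, x ^ (p-1) * (1 - x) ^ (q-1) : ℝ) : ℂ) := by
    rw [Complex.betaIntegral, intervalIntegral.integral_of_le zero_le_one,
      integral_Ioc_eq_integral_Ioo]
    have : ∀ x ∈ Ioo (0:ℝ) 1, (x:ℂ) ^ ((p:ℂ)-1) * (1-(x:ℂ)) ^ ((q:ℂ)-1)
        = ((x ^ (p-1) * (1 - x) ^ (q-1) : ℝ) : ℂ) := by
      intro x hx
      rw [show ((p:ℂ)-1) = ((p-1 : ℝ):ℂ) by push_cast; ring,
        show ((q:ℂ)-1) = ((q-1 : ℝ):ℂ) by push_cast; ring,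
        show (1-(x:ℂ)) = ((1-x : ℝ):ℂ) by push_cast; ring,
        ← Complex.ofReal_cpow hx.1.le, ← Complex.ofReal_cpow (by linarith [hx.2])]
      push_cast
      ring
    rw [setIntegral_congr_fun measurableSet_Ioo this]
    exact _root_.integral_ofReal
  rw [hbeta] at h
  have := congrArg Complex.re h
  simpa [← Complex.ofReal_mul, Complex.Gamma_ofReal, ← Complex.ofReal_add] using this


-- measurability helper
lemma aux_meas (p q l : ℝ) :
    Measurable (fun y : ℝ => y ^ p * (1 + y) ^ q * Real.exp (-(l * y))) := by
  fun_prop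

lemma aux_meas' (p q l : ℝ) :
    Measurable (fun y : ℝ => y ^ p * (1 - y) ^ q * Real.exp (-(l * y))) := by
  fun_prop

-- integrability on Ioi 0 of y^p (1+y)^q e^{-l y}
lemma aux_int_Ioi {p q l : ℝ} (hp : -1 < p) (hl : 0 < l) :
    IntegrableOn (fun y : ℝ => y ^ p * (1 + y) ^ q * Real.exp (-(l * y))) (Ioi (0:ℝ)) := by
  have hmeas := aux_meas p q l
  rw [← Ioc_union_Ioi_eq_Ioi (zero_le_one), integrableOn_union]
  constructor
  · -- on Ioc 0 1, bound by (max 1 (2^q)) * y^p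
    have hint0 : IntegrableOn (fun y : ℝ => y ^ p) (Ioc (0:ℝ) 1) :=
      (intervalIntegrable_iff_integrableOn_Ioc_of_le zero_le_one).mp (intervalIntegrable_rpow' hp)
    have hint : IntegrableOn (fun y : ℝ => max 1 (2 ^ q) * y ^ p) (Ioc (0:ℝ) 1) :=
      hint0.const_mul _
    refine Integrable.mono' hint hmeas.aestronglyMeasurable.restrict ?_
    filter_upwards [ae_restrict_mem measurableSet_Ioc] with y hy
    have hy0 : 0 < y := hy.1
    have h1y : (0:ℝ) < 1 + y := by linarith
    rw [norm_eq_abs, abs_of_nonneg (by positivity)]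
    have e1 : Real.exp (-(l * y)) ≤ 1 := by
      rw [Real.exp_le_one_iff]; nlinarith
    have e2 : (1 + y) ^ q ≤ max 1 (2 ^ q) := by
      rcases le_or_gt 0 q with hq | hq
      · exact le_max_of_le_right (Real.rpow_le_rpow h1y.le (by linarith [hy.2]) hq)
      · exact le_max_of_le_left
          (Real.rpow_le_one_of_one_le_of_nonpos (by linarith) hq.le)
    calc y ^ p * (1 + y) ^ q * Real.exp (-(l * y)) ≤ y ^ p * (1 + y) ^ q * 1 := by
          have : (0:ℝ) ≤ y ^ p * (1 + y) ^ q := by positivity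
          nlinarith [Real.exp_pos (-(l*y))]
      _ = y ^ p * (1 + y) ^ q := by ring
      _ ≤ y ^ p * max 1 (2 ^ q) := by
          have : (0:ℝ) ≤ y ^ p := by positivity
          nlinarith
      _ = max 1 (2 ^ q) * y ^ p := by ring
  · -- on Ioi 1, bound by 2^(max q 0) * (y ^ (p + max q 0) * exp (-l y))
    have hint : IntegrableOn
        (fun y : ℝ => 2 ^ max q 0 * (y ^ (p + max q 0) * Real.exp (-(l * y)))) (Ioi (0:ℝ)) := by
      refine Integrable.const_mul ?_ _
      have := integrableOn_rpow_mul_exp_neg_mul_rpow (p := 1) (s := p + max q 0)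
        (by have := le_max_right q 0; linarith) zero_lt_one hl
      refine this.congr_fun (fun y hy => ?_) measurableSet_Ioi
      beta_reduce
      rw [Real.rpow_one]; ring_nf
    refine Integrable.mono' (hint.mono_set (Ioi_subset_Ioi zero_le_one))
      hmeas.aestronglyMeasurable.restrict ?_
    filter_upwards [ae_restrict_mem measurableSet_Ioi] with y (hy : 1 < y)
    have hy0 : (0:ℝ) < y := by linarith
    have h1y : (0:ℝ) < 1 + y := by linarith
    rw [norm_eq_abs, abs_of_nonneg (by positivity)]
    have key : (1 + y) ^ q ≤ 2 ^ max q 0 * y ^ max q 0 := by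
      rcases le_or_gt q 0 with hq | hq
      · rw [max_eq_right hq]
        simp only [Real.rpow_zero, mul_one, one_mul]
        exact Real.rpow_le_one_of_one_le_of_nonpos (by linarith) hq
      · rw [max_eq_left hq.le, ← Real.mul_rpow (by norm_num) hy0.le]
        exact Real.rpow_le_rpow h1y.le (by linarith) hq.le
    calc y ^ p * (1 + y) ^ q * Real.exp (-(l * y))
        ≤ y ^ p * (2 ^ max q 0 * y ^ max q 0) * Real.exp (-(l * y)) := by
          have h1 : (0:ℝ) ≤ y ^ p := by positivity
          have h2 := (Real.exp_pos (-(l*y))).le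
          apply mul_le_mul_of_nonneg_right _ h2
          exact mul_le_mul_of_nonneg_left key h1
      _ = 2 ^ max q 0 * (y ^ (p + max q 0) * Real.exp (-(l * y))) := by
          rw [Real.rpow_add hy0]; ring


lemma aux_cov {α₁ α₂ u : ℝ} (hu : 0 < u) :
    ∫ t in Ioo (0:ℝ) (min 1 u),
      ((1+u-2*t)/u) * ((t*(1+u-t)/u) ^ (α₁-1) * (1 - t*(1+u-t)/u) ^ (α₂-1))
    = ∫ x in Ioo (0:ℝ) 1, x ^ (α₁-1) * (1-x) ^ (α₂-1) := by
  set m := min 1 u with hm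
  have hm0 : 0 < m := lt_min one_pos hu
  have hmu : m ≤ u := min_le_right _ _
  have hm1 : m ≤ 1 := min_le_left _ _
  have h2m : 2 * m ≤ 1 + u := by
    rcases min_le_iff.mp (le_refl m) with h | h <;> [skip; skip] <;> nlinarith [hm1, hmu]
  set φ : ℝ → ℝ := fun t => t * (1+u-t) / u with hφ
  have hφ0 : φ 0 = 0 := by simp [hφ]
  have hφm : φ m = 1 := by
    have : m * (1+u-m) = u := by
      have : (m - 1) * (m - u) = 0 := by
        rcases min_cases 1 u with ⟨h, _⟩ | ⟨h, _⟩ <;> rw [hm, h] <;> ring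
      nlinarith [this]
    rw [hφ]; field_simp [this]; exact this
  have hmono : StrictMonoOn φ (Icc 0 m) := by
    intro x hx y hy hxy
    have key : φ y - φ x = (y - x) * (1 + u - (x + y)) / u := by
      rw [hφ]; field_simp; ring
    have : 0 < φ y - φ x := by
      rw [key]
      apply div_pos _ hu
      apply mul_pos (by linarith)
      have : x + y < 2 * m := by
        rcases hx with ⟨_, hx2⟩; rcases hy with ⟨_, hy2⟩; linarith
      linarith
    linarith
  have hcont : ContinuousOn φ (Icc 0 m) := by
    apply Continuous.continuousOn; fun_prop
  have himg : φ '' Ioo 0 m = Ioo (0:ℝ) 1 := by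
    apply Subset.antisymm
    · have := hmono.image_Ioo_subset
      rwa [hφ0, hφm] at this
    · have := intermediate_value_Ioo hm0.le hcont
      rwa [hφ0, hφm] at this
  have hderiv : ∀ t ∈ Ioo (0:ℝ) m, HasDerivWithinAt φ ((1+u-2*t)/u) (Ioo 0 m) t := by
    intro t _
    have h1 : HasDerivAt (fun x : ℝ => x * (1+u-x)) (1 * (1+u-t) + t * (-1)) t := by
      exact (hasDerivAt_id t).mul ((hasDerivAt_id t).const_sub (1+u))
    have h2 := h1.div_const u
    have : (1 * (1+u-t) + t * (-1)) / u = (1+u-2*t)/u := by ring_nf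
    rw [this] at h2
    exact h2.hasDerivWithinAt
  have hinj : InjOn φ (Ioo 0 m) := (hmono.injOn).mono Ioo_subset_Icc_self
  have := integral_image_eq_integral_abs_deriv_smul (f' := fun t => (1+u-2*t)/u)
    measurableSet_Ioo hderiv hinj (fun x => x ^ (α₁-1) * (1-x) ^ (α₂-1))
  rw [himg] at this
  rw [this]
  refine setIntegral_congr_fun measurableSet_Ioo (fun t ht => ?_)
  have habs : |(1+u-2*t)/u| = (1+u-2*t)/u := by
    apply abs_of_pos
    apply div_pos _ hu
    have : t < m := ht.2
    linarith
  rw [smul_eq_mul, habs]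


noncomputable def auxF (p q l : ℝ) : ℝ → ℝ :=
  (Ioo (0:ℝ) 1).indicator (fun x => x ^ p * (1-x) ^ q * Real.exp (-(l*x)))

noncomputable def auxG (p q l : ℝ) : ℝ → ℝ :=
  fun y => y ^ p * (1+y) ^ q * Real.exp (-(l*y))

-- the pointwise slice identity
lemma aux_step1 {α₁ α₂ l u : ℝ} (hu : 0 < u) : ∀ t ∈ Ioo (0:ℝ) u,
      (auxF (α₁-1) α₂ l t * auxG (α₂-1) α₁ l (u - t)
        + auxF α₁ (α₂-1) l t * auxG α₂ (α₁-1) l (u - t))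
      = (Ioo (0:ℝ) (min 1 u)).indicator
          (fun t => Real.exp (-(l*u)) * u ^ (α₁+α₂-1) *
            (((1+u-2*t)/u) * ((t*(1+u-t)/u) ^ (α₁-1) * (1 - t*(1+u-t)/u) ^ (α₂-1)))) t := by
  set m := min 1 u with hm
  have hm0 : 0 < m := lt_min one_pos hu
  have hmu : m ≤ u := min_le_right _ _
  have hm1 : m ≤ 1 := min_le_left _ _
  intro t ht
  rcases lt_or_ge t 1 with htl | htl
  · -- t ∈ Ioo 0 m
    have htm : t ∈ Ioo (0:ℝ) m := ⟨ht.1, lt_min htl ht.2⟩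
    have ht1 : t ∈ Ioo (0:ℝ) 1 := ⟨ht.1, htl⟩
    rw [indicator_of_mem htm, auxF, auxF, indicator_of_mem ht1, indicator_of_mem ht1, auxG, auxG]
    have h0t : 0 < t := ht.1
    have h1t : 0 < 1 - t := by linarith
    have hut : 0 < u - t := by linarith [ht.2]
    have hct : 0 < 1 + u - t := by linarith
    have e1 : 1 + (u - t) = 1 + u - t := by ring
    rw [e1]
    -- rewrite exponentials
    have eexp : Real.exp (-(l*t)) * Real.exp (-(l*(u-t))) = Real.exp (-(l*u)) := by
      rw [← Real.exp_add]; ring_nf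
    -- rpow splitting
    have sp1 : (1-t) ^ α₂ = (1-t) ^ (α₂-1) * (1-t) := by
      nth_rewrite 1 [show α₂ = (α₂ - 1) + 1 by ring]
      rw [Real.rpow_add h1t, Real.rpow_one]
    have sp2 : (1+u-t) ^ α₁ = (1+u-t) ^ (α₁-1) * (1+u-t) := by
      nth_rewrite 1 [show α₁ = (α₁ - 1) + 1 by ring]
      rw [Real.rpow_add hct, Real.rpow_one]
    have sp3 : t ^ α₁ = t ^ (α₁-1) * t := by
      nth_rewrite 1 [show α₁ = (α₁ - 1) + 1 by ring]
      rw [Real.rpow_add h0t, Real.rpow_one]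
    have sp4 : (u-t) ^ α₂ = (u-t) ^ (α₂-1) * (u-t) := by
      nth_rewrite 1 [show α₂ = (α₂ - 1) + 1 by ring]
      rw [Real.rpow_add hut, Real.rpow_one]
    have spu : u ^ (α₁+α₂-1) = u ^ (α₁-1) * u ^ (α₂-1) * u := by
      rw [show α₁+α₂-1 = (α₁-1) + (α₂-1) + 1 by ring, Real.rpow_add hu, Real.rpow_add hu,
        Real.rpow_one]
    -- rhs rpow products
    have r1 : (t*(1+u-t)/u) ^ (α₁-1) = t ^ (α₁-1) * (1+u-t) ^ (α₁-1) / u ^ (α₁-1) := by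
      rw [Real.div_rpow (by positivity) hu.le, Real.mul_rpow h0t.le hct.le]
    have r2 : (1 - t*(1+u-t)/u) = (1-t)*(u-t)/u := by field_simp; ring
    have r3 : ((1-t)*(u-t)/u) ^ (α₂-1) = (1-t) ^ (α₂-1) * (u-t) ^ (α₂-1) / u ^ (α₂-1) := by
      rw [Real.div_rpow (by positivity) hu.le, Real.mul_rpow h1t.le hut.le]
    rw [r2, r1, r3, sp1, sp2, sp3, sp4, spu, ← eexp]
    have hu1 : u ^ (α₁-1) ≠ 0 := by positivity
    have hu2 : u ^ (α₂-1) ≠ 0 := by positivity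
    field_simp
    ring
  · -- t ≥ 1 : both sides vanish
    have htm : t ∉ Ioo (0:ℝ) m := fun h => absurd h.2 (by simp [hm]; intro h'; linarith)
    have ht1 : t ∉ Ioo (0:ℝ) 1 := fun h => absurd h.2 (by linarith)
    rw [indicator_of_notMem htm, auxF, auxF, indicator_of_notMem ht1,
      indicator_of_notMem ht1]
    ring
lemma aux_slice {α₁ α₂ l u : ℝ} (hu : 0 < u) :
    ∫ t in (0:ℝ)..u, (auxF (α₁-1) α₂ l t * auxG (α₂-1) α₁ l (u - t)
      + auxF α₁ (α₂-1) l t * auxG α₂ (α₁-1) l (u - t))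
    = Real.exp (-(l*u)) * u ^ (α₁+α₂-1) *
        ∫ x in Ioo (0:ℝ) 1, x ^ (α₁-1) * (1-x) ^ (α₂-1) := by
  have hmu : min 1 u ≤ u := min_le_right _ _
  rw [intervalIntegral.integral_of_le hu.le, integral_Ioc_eq_integral_Ioo]
  rw [setIntegral_congr_fun measurableSet_Ioo (aux_step1 hu), setIntegral_indicator measurableSet_Ioo,
    (by rw [inter_eq_right]; exact Ioo_subset_Ioo le_rfl hmu : Ioo (0:ℝ) u ∩ Ioo 0 (min 1 u) = Ioo 0 (min 1 u)),
    MeasureTheory.integral_const_mul, aux_cov hu]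


lemma aux_auxF_nonneg (p q l t : ℝ) : 0 ≤ auxF p q l t := by
  apply indicator_nonneg
  intro x hx
  have h0 : 0 < x := hx.1
  have h1 : 0 < 1 - x := by linarith [hx.2]
  positivity

lemma aux_auxG_nonneg {p q l y : ℝ} (hy : 0 < y) : 0 ≤ auxG p q l y := by
  have h1 : 0 < 1 + y := by linarith
  unfold auxG
  positivity

lemma aux_sum_int {α₁ α₂ l u : ℝ} (h1 : 0 < α₁) (h2 : 0 < α₂) (hu : 0 < u) :
    IntegrableOn (fun t => auxF (α₁-1) α₂ l t * auxG (α₂-1) α₁ l (u - t)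
      + auxF α₁ (α₂-1) l t * auxG α₂ (α₁-1) l (u - t)) (Ioo (0:ℝ) u) := by
  set m := min 1 u with hm
  have hm0 : 0 < m := lt_min one_pos hu
  have hmu : m ≤ u := min_le_right _ _
  have hm1 : m ≤ 1 := min_le_left _ _
  have h2m : 2 * m ≤ 1 + u := by
    rcases min_le_iff.mp (le_refl m) with h | h <;> [skip; skip] <;> nlinarith [hm1, hmu]
  set φ : ℝ → ℝ := fun t => t * (1+u-t) / u with hφ
  have hmono : StrictMonoOn φ (Icc 0 m) := by
    intro x hx y hy hxy
    have key : φ y - φ x = (y - x) * (1 + u - (x + y)) / u := by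
      rw [hφ]; field_simp; ring
    have : 0 < φ y - φ x := by
      rw [key]
      apply div_pos _ hu
      apply mul_pos (by linarith)
      have : x + y < 2 * m := by
        rcases hx with ⟨_, hx2⟩; rcases hy with ⟨_, hy2⟩; linarith
      linarith
    linarith
  have hφ0 : φ 0 = 0 := by simp [hφ]
  have hφm : φ m = 1 := by
    have : m * (1+u-m) = u := by
      have : (m - 1) * (m - u) = 0 := by
        rcases min_cases 1 u with ⟨h, _⟩ | ⟨h, _⟩ <;> rw [hm, h] <;> ring
      nlinarith [this]
    rw [hφ]; field_simp [this]; exact this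
  have hcont : ContinuousOn φ (Icc 0 m) := by
    apply Continuous.continuousOn; fun_prop
  have himg : φ '' Ioo 0 m = Ioo (0:ℝ) 1 := by
    apply Subset.antisymm
    · have := hmono.image_Ioo_subset
      rwa [hφ0, hφm] at this
    · have := intermediate_value_Ioo hm0.le hcont
      rwa [hφ0, hφm] at this
  have hderiv : ∀ t ∈ Ioo (0:ℝ) m, HasDerivWithinAt φ ((1+u-2*t)/u) (Ioo 0 m) t := by
    intro t _
    have hd1 : HasDerivAt (fun x : ℝ => x * (1+u-x)) (1 * (1+u-t) + t * (-1)) t := by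
      exact (hasDerivAt_id t).mul ((hasDerivAt_id t).const_sub (1+u))
    have hd2 := hd1.div_const u
    have : (1 * (1+u-t) + t * (-1)) / u = (1+u-2*t)/u := by ring_nf
    rw [this] at hd2
    exact hd2.hasDerivWithinAt
  have hinj : InjOn φ (Ioo 0 m) := (hmono.injOn).mono Ioo_subset_Icc_self
  have hbase : IntegrableOn (fun x : ℝ => x ^ (α₁-1) * (1-x) ^ (α₂-1)) (Ioo (0:ℝ) 1) :=
    aux_beta_integrable h1 h2
  have hiff := integrableOn_image_iff_integrableOn_abs_deriv_smul (f' := fun t => (1+u-2*t)/u)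
    measurableSet_Ioo hderiv hinj (fun x => x ^ (α₁-1) * (1-x) ^ (α₂-1))
  rw [himg] at hiff
  have himgint := hiff.mp hbase
  have hG0 : IntegrableOn
      (fun t => ((1+u-2*t)/u) * ((t*(1+u-t)/u) ^ (α₁-1) * (1 - t*(1+u-t)/u) ^ (α₂-1)))
      (Ioo (0:ℝ) m) := by
    refine himgint.congr_fun (fun t ht => ?_) measurableSet_Ioo
    have habs : |(1+u-2*t)/u| = (1+u-2*t)/u := by
      apply abs_of_pos
      apply div_pos _ hu
      have : t < m := ht.2
      linarith
    beta_reduce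
    rw [smul_eq_mul, habs]
  have hG : IntegrableOn
      (fun t => Real.exp (-(l*u)) * u ^ (α₁+α₂-1) *
        (((1+u-2*t)/u) * ((t*(1+u-t)/u) ^ (α₁-1) * (1 - t*(1+u-t)/u) ^ (α₂-1))))
      (Ioo (0:ℝ) m) := by
    simpa [mul_assoc, IntegrableOn] using hG0.const_mul (Real.exp (-(l*u)) * u ^ (α₁+α₂-1))
  have hInd : IntegrableOn ((Ioo (0:ℝ) m).indicator
      (fun t => Real.exp (-(l*u)) * u ^ (α₁+α₂-1) *
        (((1+u-2*t)/u) * ((t*(1+u-t)/u) ^ (α₁-1) * (1 - t*(1+u-t)/u) ^ (α₂-1)))))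
      (Ioo (0:ℝ) u) := by
    rw [IntegrableOn, integrable_indicator_iff measurableSet_Ioo, IntegrableOn,
      Measure.restrict_restrict measurableSet_Ioo,
      inter_eq_left.mpr (Ioo_subset_Ioo le_rfl hmu)]
    exact hG
  exact hInd.congr_fun (fun t ht => (aux_step1 hu t ht).symm) measurableSet_Ioo

lemma aux_int_F {p q l : ℝ} (hp : 0 < p) (hq : 0 < q) (hl : 0 < l) :
    IntegrableOn (fun x : ℝ => x ^ (p-1) * (1-x) ^ (q-1) * Real.exp (-(l*x))) (Ioo (0:ℝ) 1) := by
  refine Integrable.mono' (aux_beta_integrable hp hq) ((aux_meas' _ _ _).aestronglyMeasurable.restrict) ?_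
  filter_upwards [ae_restrict_mem measurableSet_Ioo] with x hx
  have h0 : 0 < x := hx.1
  have h1 : 0 < 1 - x := by linarith [hx.2]
  rw [norm_eq_abs, abs_of_nonneg (by positivity)]
  have : Real.exp (-(l*x)) ≤ 1 := by rw [Real.exp_le_one_iff]; nlinarith
  nlinarith [Real.rpow_pos_of_pos h0 (p-1), Real.rpow_pos_of_pos h1 (q-1),
    mul_pos (Real.rpow_pos_of_pos h0 (p-1)) (Real.rpow_pos_of_pos h1 (q-1)),
    Real.exp_pos (-(l*x))]

lemma aux_int_auxF {p q l : ℝ} (hp : 0 < p) (hq : 0 < q) (hl : 0 < l) :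
    IntegrableOn (auxF (p-1) (q-1) l) (Ioi (0:ℝ)) := by
  rw [auxF, IntegrableOn, integrable_indicator_iff measurableSet_Ioo, IntegrableOn,
    Measure.restrict_restrict measurableSet_Ioo,
    (inter_eq_left.mpr (fun x hx => hx.1) : Ioo (0:ℝ) 1 ∩ Ioi 0 = Ioo 0 1)]
  exact aux_int_F hp hq hl

lemma aux_core {α₁ α₂ l : ℝ} (h1 : 0 < α₁) (h2 : 0 < α₂) (hl : 0 < l) :
    (∫ x in Ioo (0:ℝ) 1, x ^ (α₁-1) * (1-x) ^ α₂ * Real.exp (-(l*x))) *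
      (∫ y in Ioi (0:ℝ), y ^ (α₂-1) * (1+y) ^ α₁ * Real.exp (-(l*y))) +
    (∫ x in Ioo (0:ℝ) 1, x ^ α₁ * (1-x) ^ (α₂-1) * Real.exp (-(l*x))) *
      (∫ y in Ioi (0:ℝ), y ^ α₂ * (1+y) ^ (α₁-1) * Real.exp (-(l*y)))
    = Real.Gamma α₁ * Real.Gamma α₂ * l ^ (-(α₁+α₂)) := by
  have hσ : 0 < α₁ + α₂ := by linarith
  -- integrability
  have hfA : IntegrableOn (auxF (α₁-1) α₂ l) (Ioi (0:ℝ)) := by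
    have := aux_int_auxF h1 (q := α₂ + 1) (by linarith) hl
    simpa using this
  have hfB : IntegrableOn (auxF α₁ (α₂-1) l) (Ioi (0:ℝ)) := by
    have := aux_int_auxF (p := α₁ + 1) (by linarith) h2 hl
    simpa using this
  have hfD : IntegrableOn (auxG (α₂-1) α₁ l) (Ioi (0:ℝ)) := aux_int_Ioi (by linarith) hl
  have hfC : IntegrableOn (auxG α₂ (α₁-1) l) (Ioi (0:ℝ)) := aux_int_Ioi (by linarith) hl
  -- rewrite the Ioo integrals as Ioi integrals of auxF
  have hA : ∫ x in Ioo (0:ℝ) 1, x ^ (α₁-1) * (1-x) ^ α₂ * Real.exp (-(l*x))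
      = ∫ x in Ioi (0:ℝ), auxF (α₁-1) α₂ l x := by
    rw [auxF, setIntegral_indicator measurableSet_Ioo,
      (inter_eq_right.mpr (fun x hx => hx.1) : Ioi (0:ℝ) ∩ Ioo 0 1 = Ioo 0 1)]
  have hB : ∫ x in Ioo (0:ℝ) 1, x ^ α₁ * (1-x) ^ (α₂-1) * Real.exp (-(l*x))
      = ∫ x in Ioi (0:ℝ), auxF α₁ (α₂-1) l x := by
    rw [auxF, setIntegral_indicator measurableSet_Ioo,
      (inter_eq_right.mpr (fun x hx => hx.1) : Ioi (0:ℝ) ∩ Ioo 0 1 = Ioo 0 1)]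
  have hD : (∫ y in Ioi (0:ℝ), y ^ (α₂-1) * (1+y) ^ α₁ * Real.exp (-(l*y)))
      = ∫ y in Ioi (0:ℝ), auxG (α₂-1) α₁ l y := rfl
  have hC : (∫ y in Ioi (0:ℝ), y ^ α₂ * (1+y) ^ (α₁-1) * Real.exp (-(l*y)))
      = ∫ y in Ioi (0:ℝ), auxG α₂ (α₁-1) l y := rfl
  rw [hA, hB, hD, hC]
  -- convolution identities
  have conv1 := integral_posConvolution hfA hfD (ContinuousLinearMap.mul ℝ ℝ)
  have conv2 := integral_posConvolution hfB hfC (ContinuousLinearMap.mul ℝ ℝ)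
  simp_rw [ContinuousLinearMap.mul_apply'] at conv1 conv2
  rw [← conv1, ← conv2]
  -- outer integrability of the two convolution integrals
  have hpc1 : IntegrableOn (fun u => ∫ t in (0:ℝ)..u, auxF (α₁-1) α₂ l t * auxG (α₂-1) α₁ l (u-t))
      (Ioi (0:ℝ)) := by
    have h := (integrable_posConvolution hfA hfD (ContinuousLinearMap.mul ℝ ℝ)).integrableOn
      (s := Ioi (0:ℝ))
    refine h.congr_fun ?_ measurableSet_Ioi
    intro u hu
    rw [posConvolution, indicator_of_mem hu]
    rfl
  have hpc2 : IntegrableOn (fun u => ∫ t in (0:ℝ)..u, auxF α₁ (α₂-1) l t * auxG α₂ (α₁-1) l (u-t))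
      (Ioi (0:ℝ)) := by
    have h := (integrable_posConvolution hfB hfC (ContinuousLinearMap.mul ℝ ℝ)).integrableOn
      (s := Ioi (0:ℝ))
    refine h.congr_fun ?_ measurableSet_Ioi
    intro u hu
    rw [posConvolution, indicator_of_mem hu]
    rfl
  rw [← integral_add hpc1 hpc2]
  -- apply slice lemma
  have hslice : ∀ u ∈ Ioi (0:ℝ),
      ((∫ t in (0:ℝ)..u, auxF (α₁-1) α₂ l t * auxG (α₂-1) α₁ l (u-t)) +
       ∫ t in (0:ℝ)..u, auxF α₁ (α₂-1) l t * auxG α₂ (α₁-1) l (u-t))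
      = (u ^ (α₁+α₂-1) * Real.exp (-(l*u))) *
          ∫ x in Ioo (0:ℝ) 1, x ^ (α₁-1) * (1-x) ^ (α₂-1) := by
    intro u hu
    rw [← intervalIntegral.integral_add]
    · rw [aux_slice hu]; ring
    · have mF1 : Measurable (auxF (α₁-1) α₂ l) := (aux_meas' _ _ _).indicator measurableSet_Ioo
      have mG1 : Measurable (fun t : ℝ => auxG (α₂-1) α₁ l (u - t)) :=
        (aux_meas _ _ _).comp (measurable_const.sub measurable_id)
      rw [intervalIntegrable_iff_integrableOn_Ioo_of_le (le_of_lt hu)]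
      refine Integrable.mono' (aux_sum_int (l := l) h1 h2 hu) (mF1.mul mG1).aestronglyMeasurable.restrict ?_
      filter_upwards [ae_restrict_mem measurableSet_Ioo] with t ht
      have hut : 0 < u - t := by linarith [ht.2]
      have n1 : 0 ≤ auxF (α₁-1) α₂ l t * auxG (α₂-1) α₁ l (u - t) :=
        mul_nonneg (aux_auxF_nonneg _ _ _ _) (aux_auxG_nonneg hut)
      have n2 : 0 ≤ auxF α₁ (α₂-1) l t * auxG α₂ (α₁-1) l (u - t) :=
        mul_nonneg (aux_auxF_nonneg _ _ _ _) (aux_auxG_nonneg hut)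
      rw [Real.norm_eq_abs, abs_of_nonneg n1]
      linarith
    · have mF1 : Measurable (auxF α₁ (α₂-1) l) := (aux_meas' _ _ _).indicator measurableSet_Ioo
      have mG1 : Measurable (fun t : ℝ => auxG α₂ (α₁-1) l (u - t)) :=
        (aux_meas _ _ _).comp (measurable_const.sub measurable_id)
      rw [intervalIntegrable_iff_integrableOn_Ioo_of_le (le_of_lt hu)]
      refine Integrable.mono' (aux_sum_int (l := l) h1 h2 hu) (mF1.mul mG1).aestronglyMeasurable.restrict ?_
      filter_upwards [ae_restrict_mem measurableSet_Ioo] with t ht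
      have hut : 0 < u - t := by linarith [ht.2]
      have n1 : 0 ≤ auxF (α₁-1) α₂ l t * auxG (α₂-1) α₁ l (u - t) :=
        mul_nonneg (aux_auxF_nonneg _ _ _ _) (aux_auxG_nonneg hut)
      have n2 : 0 ≤ auxF α₁ (α₂-1) l t * auxG α₂ (α₁-1) l (u - t) :=
        mul_nonneg (aux_auxF_nonneg _ _ _ _) (aux_auxG_nonneg hut)
      rw [Real.norm_eq_abs, abs_of_nonneg n2]
      linarith
  rw [setIntegral_congr_fun measurableSet_Ioi hslice]
  rw [MeasureTheory.integral_mul_const, integral_rpow_mul_exp_neg_mul_Ioi hσ hl]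
  rw [mul_assoc, ← aux_beta_gamma h1 h2, Real.rpow_neg hl.le, ← Real.inv_rpow hl.le, ← one_div]
  ring

/-- Determinant of the 2×2 hypergeometric period matrix with exponential weight
for two points on a line, with domains `[z₁,z₂]` and `[z₂,∞)`. -/
theorem det_period_matrix_two_points_exp (z₁ z₂ α₁ α₂ a : ℝ)
    (h₁₂ : z₁ < z₂) (hα₁ : 0 < α₁) (hα₂ : 0 < α₂) (ha : 0 < a) :
    let U : ℝ → ℝ := fun t => |t - z₁| ^ α₁ * |t - z₂| ^ α₂
    Matrix.det
      !![∫ t in z₁..z₂, Real.exp (-a * t) * (α₁ * U t / (t - z₁)),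
           ∫ t in Set.Ioi z₂, Real.exp (-a * t) * (α₁ * U t / (t - z₁));
         ∫ t in z₁..z₂, Real.exp (-a * t) * (α₂ * U t / (t - z₂)),
           ∫ t in Set.Ioi z₂, Real.exp (-a * t) * (α₂ * U t / (t - z₂))] =
      Real.Gamma (α₁ + 1) * Real.Gamma (α₂ + 1) * Real.exp (-a * (z₁ + z₂)) *
        a ^ (-(α₁ + α₂)) * (z₂ - z₁) ^ (α₁ + α₂) := by
  intro U
  set c : ℝ := z₂ - z₁ with hcdef
  have hc : 0 < c := by simp [hcdef]; linarith
  set l : ℝ := a * c with hldef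
  have hl : 0 < l := mul_pos ha hc
  have hσ : 0 < α₁ + α₂ := by linarith
  -- change of variables infrastructure for Ioo z₁ z₂
  have himg1 : (fun x : ℝ => c*x + z₁) '' Ioo 0 1 = Ioo z₁ z₂ := by
    rw [image_affine_Ioo hc]
    norm_num [hcdef]
  have hderiv1 : ∀ x ∈ Ioo (0:ℝ) 1,
      HasDerivWithinAt (fun x : ℝ => c*x + z₁) c (Ioo 0 1) x := by
    intro x _
    simpa using (((hasDerivAt_id x).const_mul c).add_const z₁).hasDerivWithinAt
  have hinj1 : InjOn (fun x : ℝ => c*x + z₁) (Ioo 0 1) := by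
    intro x _ y _ h
    simp only [add_left_inj] at h
    exact mul_left_cancel₀ hc.ne' h
  -- change of variables infrastructure for Ioi z₂
  have himg2 : (fun y : ℝ => c*y + z₂) '' Ioi 0 = Ioi z₂ := by
    have : (fun y : ℝ => c*y + z₂) = (fun y : ℝ => y + z₂) ∘ (fun y : ℝ => c*y) := rfl
    rw [this, image_comp, image_const_mul_Ioi_zero hc, image_add_const_Ioi, zero_add]
  have hderiv2 : ∀ y ∈ Ioi (0:ℝ),
      HasDerivWithinAt (fun y : ℝ => c*y + z₂) c (Ioi 0) y := by
    intro y _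
    simpa using (((hasDerivAt_id y).const_mul c).add_const z₂).hasDerivWithinAt
  have hinj2 : InjOn (fun y : ℝ => c*y + z₂) (Ioi 0) := by
    intro x _ y _ h
    simp only [add_left_inj] at h
    exact mul_left_cancel₀ hc.ne' h
  -- entry (1,1)
  have E11 : (∫ t in z₁..z₂, Real.exp (-a * t) * (α₁ * U t / (t - z₁)))
      = (α₁ * Real.exp (-(a*z₁)) * c ^ (α₁+α₂)) *
        ∫ x in Ioo (0:ℝ) 1, x ^ (α₁-1) * (1-x) ^ α₂ * Real.exp (-(l*x)) := by
    rw [intervalIntegral.integral_of_le h₁₂.le, integral_Ioc_eq_integral_Ioo, ← himg1,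
      integral_image_eq_integral_abs_deriv_smul (f' := fun _ => c) measurableSet_Ioo
        hderiv1 hinj1, ← MeasureTheory.integral_const_mul]
    refine setIntegral_congr_fun measurableSet_Ioo (fun x hx => ?_)
    have h0x : 0 < x := hx.1
    have h1x : 0 < 1 - x := by linarith [hx.2]
    have e1 : |c*x + z₁ - z₁| = c*x := by
      rw [show c*x + z₁ - z₁ = c*x by ring, abs_of_pos (by positivity)]
    have e2 : |c*x + z₁ - z₂| = c*(1-x) := by
      rw [show c*x + z₁ - z₂ = -(c*(1-x)) by rw [hcdef]; ring, abs_neg,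
        abs_of_pos (by positivity)]
    have eexp : Real.exp (-a * (c*x+z₁)) = Real.exp (-(a*z₁)) * Real.exp (-(l*x)) := by
      rw [← Real.exp_add, hldef]; ring_nf
    have sp1 : (c*x) ^ α₁ = c ^ (α₁-1) * x ^ (α₁-1) * (c * x) := by
      rw [Real.mul_rpow hc.le h0x.le]
      nth_rewrite 1 2 [show α₁ = (α₁ - 1) + 1 by ring]
      rw [Real.rpow_add hc, Real.rpow_add h0x, Real.rpow_one, Real.rpow_one]
      ring
    have sp2 : (c*(1-x)) ^ α₂ = c ^ α₂ * (1-x) ^ α₂ := Real.mul_rpow hc.le h1x.le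
    have spc : c ^ (α₁+α₂) = c ^ (α₁-1) * c ^ α₂ * c := by
      rw [show α₁+α₂ = (α₁-1) + α₂ + 1 by ring, Real.rpow_add hc, Real.rpow_add hc,
        Real.rpow_one]
    rw [smul_eq_mul, abs_of_pos hc, show U (c*x + z₁) = |c*x + z₁ - z₁| ^ α₁ * |c*x + z₁ - z₂| ^ α₂ from rfl,
      e1, e2, eexp, sp1, sp2, spc]
    have hcx : c * x ≠ 0 := by positivity
    field_simp
    ring
  -- entry (2,1)
  have E21 : (∫ t in z₁..z₂, Real.exp (-a * t) * (α₂ * U t / (t - z₂)))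
      = -((α₂ * Real.exp (-(a*z₁)) * c ^ (α₁+α₂)) *
        ∫ x in Ioo (0:ℝ) 1, x ^ α₁ * (1-x) ^ (α₂-1) * Real.exp (-(l*x))) := by
    rw [intervalIntegral.integral_of_le h₁₂.le, integral_Ioc_eq_integral_Ioo, ← himg1,
      integral_image_eq_integral_abs_deriv_smul (f' := fun _ => c) measurableSet_Ioo
        hderiv1 hinj1, ← MeasureTheory.integral_const_mul, ← MeasureTheory.integral_neg]
    refine setIntegral_congr_fun measurableSet_Ioo (fun x hx => ?_)
    have h0x : 0 < x := hx.1
    have h1x : 0 < 1 - x := by linarith [hx.2]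
    have e1 : |c*x + z₁ - z₁| = c*x := by
      rw [show c*x + z₁ - z₁ = c*x by ring, abs_of_pos (by positivity)]
    have e2 : |c*x + z₁ - z₂| = c*(1-x) := by
      rw [show c*x + z₁ - z₂ = -(c*(1-x)) by rw [hcdef]; ring, abs_neg,
        abs_of_pos (by positivity)]
    have e3 : c*x + z₁ - z₂ = -(c*(1-x)) := by rw [hcdef]; ring
    have eexp : Real.exp (-a * (c*x+z₁)) = Real.exp (-(a*z₁)) * Real.exp (-(l*x)) := by
      rw [← Real.exp_add, hldef]; ring_nf
    have sp1 : (c*x) ^ α₁ = c ^ α₁ * x ^ α₁ := Real.mul_rpow hc.le h0x.le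
    have sp2 : (c*(1-x)) ^ α₂ = c ^ (α₂-1) * (1-x) ^ (α₂-1) * (c * (1-x)) := by
      rw [Real.mul_rpow hc.le h1x.le]
      nth_rewrite 1 2 [show α₂ = (α₂ - 1) + 1 by ring]
      rw [Real.rpow_add hc, Real.rpow_add h1x, Real.rpow_one, Real.rpow_one]
      ring
    have spc : c ^ (α₁+α₂) = c ^ α₁ * c ^ (α₂-1) * c := by
      rw [show α₁+α₂ = α₁ + (α₂-1) + 1 by ring, Real.rpow_add hc, Real.rpow_add hc,
        Real.rpow_one]
    rw [smul_eq_mul, abs_of_pos hc, show U (c*x + z₁) = |c*x + z₁ - z₁| ^ α₁ * |c*x + z₁ - z₂| ^ α₂ from rfl,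
      e1, e2, e3, eexp, sp1, sp2, spc]
    have hcx : c * (1-x) ≠ 0 := by positivity
    field_simp
  -- entry (1,2)
  have E12 : (∫ t in Set.Ioi z₂, Real.exp (-a * t) * (α₁ * U t / (t - z₁)))
      = (α₁ * Real.exp (-(a*z₂)) * c ^ (α₁+α₂)) *
        ∫ y in Ioi (0:ℝ), y ^ α₂ * (1+y) ^ (α₁-1) * Real.exp (-(l*y)) := by
    rw [← himg2,
      integral_image_eq_integral_abs_deriv_smul (f' := fun _ => c) measurableSet_Ioi
        hderiv2 hinj2, ← MeasureTheory.integral_const_mul]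
    refine setIntegral_congr_fun measurableSet_Ioi (fun y hy => ?_)
    have h0y : (0:ℝ) < y := hy
    have h1y : (0:ℝ) < 1 + y := by linarith
    have e1 : |c*y + z₂ - z₁| = c*(1+y) := by
      rw [show c*y + z₂ - z₁ = c*(1+y) by rw [hcdef]; ring, abs_of_pos (by positivity)]
    have e2 : |c*y + z₂ - z₂| = c*y := by
      rw [show c*y + z₂ - z₂ = c*y by ring, abs_of_pos (by positivity)]
    have e3 : c*y + z₂ - z₁ = c*(1+y) := by rw [hcdef]; ring
    have eexp : Real.exp (-a * (c*y+z₂)) = Real.exp (-(a*z₂)) * Real.exp (-(l*y)) := by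
      rw [← Real.exp_add, hldef]; ring_nf
    have sp1 : (c*(1+y)) ^ α₁ = c ^ (α₁-1) * (1+y) ^ (α₁-1) * (c*(1+y)) := by
      rw [Real.mul_rpow hc.le h1y.le]
      nth_rewrite 1 2 [show α₁ = (α₁ - 1) + 1 by ring]
      rw [Real.rpow_add hc, Real.rpow_add h1y, Real.rpow_one, Real.rpow_one]
      ring
    have sp2 : (c*y) ^ α₂ = c ^ α₂ * y ^ α₂ := Real.mul_rpow hc.le h0y.le
    have spc : c ^ (α₁+α₂) = c ^ (α₁-1) * c ^ α₂ * c := by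
      rw [show α₁+α₂ = (α₁-1) + α₂ + 1 by ring, Real.rpow_add hc, Real.rpow_add hc,
        Real.rpow_one]
    rw [smul_eq_mul, abs_of_pos hc, show U (c*y + z₂) = |c*y + z₂ - z₁| ^ α₁ * |c*y + z₂ - z₂| ^ α₂ from rfl,
      e1, e2, e3, eexp, sp1, sp2, spc]
    have hcy : c * (1+y) ≠ 0 := by positivity
    field_simp
  -- entry (2,2)
  have E22 : (∫ t in Set.Ioi z₂, Real.exp (-a * t) * (α₂ * U t / (t - z₂)))
      = (α₂ * Real.exp (-(a*z₂)) * c ^ (α₁+α₂)) *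
        ∫ y in Ioi (0:ℝ), y ^ (α₂-1) * (1+y) ^ α₁ * Real.exp (-(l*y)) := by
    rw [← himg2,
      integral_image_eq_integral_abs_deriv_smul (f' := fun _ => c) measurableSet_Ioi
        hderiv2 hinj2, ← MeasureTheory.integral_const_mul]
    refine setIntegral_congr_fun measurableSet_Ioi (fun y hy => ?_)
    have h0y : (0:ℝ) < y := hy
    have h1y : (0:ℝ) < 1 + y := by linarith
    have e1 : |c*y + z₂ - z₁| = c*(1+y) := by
      rw [show c*y + z₂ - z₁ = c*(1+y) by rw [hcdef]; ring, abs_of_pos (by positivity)]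
    have e2 : |c*y + z₂ - z₂| = c*y := by
      rw [show c*y + z₂ - z₂ = c*y by ring, abs_of_pos (by positivity)]
    have e3 : c*y + z₂ - z₂ = c*y := by ring
    have eexp : Real.exp (-a * (c*y+z₂)) = Real.exp (-(a*z₂)) * Real.exp (-(l*y)) := by
      rw [← Real.exp_add, hldef]; ring_nf
    have sp1 : (c*(1+y)) ^ α₁ = c ^ α₁ * (1+y) ^ α₁ := Real.mul_rpow hc.le h1y.le
    have sp2 : (c*y) ^ α₂ = c ^ (α₂-1) * y ^ (α₂-1) * (c*y) := by
      rw [Real.mul_rpow hc.le h0y.le]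
      nth_rewrite 1 2 [show α₂ = (α₂ - 1) + 1 by ring]
      rw [Real.rpow_add hc, Real.rpow_add h0y, Real.rpow_one, Real.rpow_one]
      ring
    have spc : c ^ (α₁+α₂) = c ^ α₁ * c ^ (α₂-1) * c := by
      rw [show α₁+α₂ = α₁ + (α₂-1) + 1 by ring, Real.rpow_add hc, Real.rpow_add hc,
        Real.rpow_one]
    rw [smul_eq_mul, abs_of_pos hc, show U (c*y + z₂) = |c*y + z₂ - z₁| ^ α₁ * |c*y + z₂ - z₂| ^ α₂ from rfl,
      e1, e2, e3, eexp, sp1, sp2, spc]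
    have hcy : c * y ≠ 0 := by positivity
    field_simp
  rw [Matrix.det_fin_two_of, E11, E21, E12, E22]
  have key := aux_core hα₁ hα₂ hl
  -- final algebra
  have hGamma1 : Real.Gamma (α₁ + 1) = α₁ * Real.Gamma α₁ := Real.Gamma_add_one hα₁.ne'
  have hGamma2 : Real.Gamma (α₂ + 1) = α₂ * Real.Gamma α₂ := Real.Gamma_add_one hα₂.ne'
  have hexp : Real.exp (-(a*z₁)) * Real.exp (-(a*z₂)) = Real.exp (-a * (z₁+z₂)) := by
    rw [← Real.exp_add]; ring_nf
  have hlpow : l ^ (-(α₁+α₂)) = a ^ (-(α₁+α₂)) * c ^ (-(α₁+α₂)) := by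
    rw [hldef, Real.mul_rpow ha.le hc.le]
  have hcpow : c ^ (α₁+α₂) * c ^ (α₁+α₂) * c ^ (-(α₁+α₂)) = c ^ (α₁+α₂) := by
    rw [← Real.rpow_add hc, ← Real.rpow_add hc]; ring_nf
  calc (α₁ * Real.exp (-(a*z₁)) * c ^ (α₁+α₂)) *
        (∫ x in Ioo (0:ℝ) 1, x ^ (α₁-1) * (1-x) ^ α₂ * Real.exp (-(l*x))) *
        ((α₂ * Real.exp (-(a*z₂)) * c ^ (α₁+α₂)) *
          ∫ y in Ioi (0:ℝ), y ^ (α₂-1) * (1+y) ^ α₁ * Real.exp (-(l*y))) -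
      (α₁ * Real.exp (-(a*z₂)) * c ^ (α₁+α₂)) *
        (∫ y in Ioi (0:ℝ), y ^ α₂ * (1+y) ^ (α₁-1) * Real.exp (-(l*y))) *
        (-((α₂ * Real.exp (-(a*z₁)) * c ^ (α₁+α₂)) *
          ∫ x in Ioo (0:ℝ) 1, x ^ α₁ * (1-x) ^ (α₂-1) * Real.exp (-(l*x))))
      = (α₁ * α₂) * (Real.exp (-(a*z₁)) * Real.exp (-(a*z₂))) *
          (c ^ (α₁+α₂) * c ^ (α₁+α₂)) *
          ((∫ x in Ioo (0:ℝ) 1, x ^ (α₁-1) * (1-x) ^ α₂ * Real.exp (-(l*x))) *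
            (∫ y in Ioi (0:ℝ), y ^ (α₂-1) * (1+y) ^ α₁ * Real.exp (-(l*y))) +
          (∫ x in Ioo (0:ℝ) 1, x ^ α₁ * (1-x) ^ (α₂-1) * Real.exp (-(l*x))) *
            (∫ y in Ioi (0:ℝ), y ^ α₂ * (1+y) ^ (α₁-1) * Real.exp (-(l*y)))) := by ring
    _ = (α₁ * α₂) * (Real.exp (-(a*z₁)) * Real.exp (-(a*z₂))) *
          (c ^ (α₁+α₂) * c ^ (α₁+α₂)) *
          (Real.Gamma α₁ * Real.Gamma α₂ * l ^ (-(α₁+α₂))) := by rw [key]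
    _ = Real.Gamma (α₁ + 1) * Real.Gamma (α₂ + 1) * Real.exp (-a * (z₁ + z₂)) *
          a ^ (-(α₁ + α₂)) * c ^ (α₁ + α₂) := by
        rw [hGamma1, hGamma2, ← hexp, hlpow]
        have hPQ : c ^ (α₁+α₂) * c ^ (-(α₁+α₂)) = 1 := by
          rw [← Real.rpow_add hc, show α₁ + α₂ + -(α₁ + α₂) = 0 by ring, Real.rpow_zero]
        linear_combination (α₁ * α₂ * Real.Gamma α₁ * Real.Gamma α₂ *
          Real.exp (-(a*z₁)) * Real.exp (-(a*z₂)) * a ^ (-(α₁+α₂)) * c ^ (α₁+α₂)) * hPQ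
end

section
/- For every real number A, the ratio of Gamma functions satisfies lim_{t → +∞} t^A · Γ(t+1)/Γ(t+1+A) = 1. -/
open Filter Real Set

private lemma gamma_logconv {a b u v : ℝ} (ha : 0 < a) (hb : 0 < b)
    (hu : 0 ≤ u) (hv : 0 ≤ v) (huv : u + v = 1) :
    Real.Gamma (u * a + v * b) ≤ Real.Gamma a ^ u * Real.Gamma b ^ v := by
  have hc : 0 < u * a + v * b := by
    rcases eq_or_lt_of_le hu with h | h
    · have hv1 : v = 1 := by linarith
      simpa [← h, hv1] using hb
    · nlinarith
  have := Real.convexOn_log_Gamma.2 (Set.mem_Ioi.mpr ha) (Set.mem_Ioi.mpr hb) hu hv huv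
  simp only [Function.comp_apply, smul_eq_mul] at this
  have h1 : Real.Gamma (u * a + v * b) = Real.exp (Real.log (Real.Gamma (u * a + v * b))) :=
    (Real.exp_log (Real.Gamma_pos_of_pos hc)).symm
  rw [h1, Real.rpow_def_of_pos (Real.Gamma_pos_of_pos ha),
    Real.rpow_def_of_pos (Real.Gamma_pos_of_pos hb), ← Real.exp_add]
  exact Real.exp_le_exp.mpr (by linarith [this])

/-- `t/(t+c) → 1`. -/
private lemma tendsto_div_add (c : ℝ) :
    Tendsto (fun t : ℝ => t / (t + c)) atTop (nhds 1) := by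
  have h : Tendsto (fun t : ℝ => 1 - c / (t + c)) atTop (nhds 1) := by
    have := tendsto_const_nhds.div_atTop (f := fun _ : ℝ => c)
      (tendsto_atTop_add_const_right atTop c tendsto_id)
    simpa using tendsto_const_nhds.sub this
  refine h.congr' ?_
  filter_upwards [eventually_gt_atTop (max 0 (-c))] with t ht
  have h0 : t + c ≠ 0 := by
    have := lt_of_le_of_lt (le_max_right 0 (-c)) ht; intro h; nlinarith
  field_simp
  ring

/-- `(t+c)/t → 1`. -/
private lemma tendsto_add_div (c : ℝ) :
    Tendsto (fun t : ℝ => (t + c) / t) atTop (nhds 1) := by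
  have h : Tendsto (fun t : ℝ => 1 + c / t) atTop (nhds 1) := by
    have := tendsto_const_nhds.div_atTop (f := fun _ : ℝ => c) tendsto_id
    simpa using tendsto_const_nhds.add this
  refine h.congr' ?_
  filter_upwards [eventually_gt_atTop (0 : ℝ)] with t ht
  field_simp

private lemma tendsto_ratio_rpow (c s : ℝ) :
    Tendsto (fun t : ℝ => (t / (t + c)) ^ s) atTop (nhds 1) := by
  have := (tendsto_div_add c).rpow_const (p := s) (Or.inl one_ne_zero)
  simpa using this

/-- Base case: `s ∈ [0,1]`. -/
private lemma base_case {s : ℝ} (hs0 : 0 ≤ s) (hs1 : s ≤ 1) :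
    Tendsto (fun t : ℝ => t ^ s * Real.Gamma (t + 1) / Real.Gamma (t + 1 + s))
      atTop (nhds 1) := by
  have hlo := tendsto_ratio_rpow 1 s
  have hhi := tendsto_ratio_rpow s s
  refine tendsto_of_tendsto_of_tendsto_of_le_of_le' hlo hhi ?_ ?_
  · -- lower bound: (t/(t+1))^s ≤ t^s Γ(t+1)/Γ(t+1+s)
    filter_upwards [eventually_gt_atTop (0 : ℝ)] with t ht
    have ht1 : (0 : ℝ) < t + 1 := by linarith
    have hts : (0 : ℝ) < t + 1 + s := by linarith
    have hG1 : 0 < Real.Gamma (t + 1) := Real.Gamma_pos_of_pos ht1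
    have hGs : 0 < Real.Gamma (t + 1 + s) := Real.Gamma_pos_of_pos hts
    -- U : Γ(t+1+s) ≤ Γ(t+1) * (t+1)^s, from log-convexity with a = t+1, b = t+2
    have U : Real.Gamma (t + 1 + s) ≤ Real.Gamma (t + 1) * (t + 1) ^ s := by
      have := gamma_logconv (u := 1 - s) (v := s) ht1 (by linarith : (0:ℝ) < t + 1 + 1)
        (by linarith) hs0 (by ring)
      have harg : (1 - s) * (t + 1) + s * (t + 1 + 1) = t + 1 + s := by ring
      rw [harg] at this
      calc Real.Gamma (t + 1 + s)
          ≤ Real.Gamma (t + 1) ^ (1 - s) * Real.Gamma (t + 1 + 1) ^ s := this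
        _ = Real.Gamma (t + 1) * (t + 1) ^ s := by
            rw [Real.Gamma_add_one ht1.ne', Real.mul_rpow ht1.le hG1.le,
              show Real.Gamma (t+1) ^ (1-s) * ((t+1) ^ s * Real.Gamma (t+1) ^ s)
                = (Real.Gamma (t+1) ^ (1-s) * Real.Gamma (t+1) ^ s) * (t+1) ^ s by ring,
              ← Real.rpow_add hG1]
            norm_num
    rw [le_div_iff₀ hGs, Real.div_rpow ht.le ht1.le]
    calc t ^ s / (t + 1) ^ s * Real.Gamma (t + 1 + s)
        ≤ t ^ s / (t + 1) ^ s * (Real.Gamma (t + 1) * (t + 1) ^ s) := by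
          apply mul_le_mul_of_nonneg_left U
          positivity
      _ = t ^ s * Real.Gamma (t + 1) := by
          have h1 : (t + 1) ^ s ≠ 0 := (Real.rpow_pos_of_pos ht1 s).ne'
          field_simp
  · -- upper bound: t^s Γ(t+1)/Γ(t+1+s) ≤ (t/(t+s))^s
    filter_upwards [eventually_gt_atTop (0 : ℝ)] with t ht
    have ht1 : (0 : ℝ) < t + 1 := by linarith
    have htps : (0 : ℝ) < t + s := by linarith
    have hts : (0 : ℝ) < t + 1 + s := by linarith
    have hG1 : 0 < Real.Gamma (t + 1) := Real.Gamma_pos_of_pos ht1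
    have hGs : 0 < Real.Gamma (t + 1 + s) := Real.Gamma_pos_of_pos hts
    -- L : Γ(t+1) * (t+s)^s ≤ Γ(t+1+s)
    have L : Real.Gamma (t + 1) * (t + s) ^ s ≤ Real.Gamma (t + 1 + s) := by
      have hGts : 0 < Real.Gamma (t + s) := Real.Gamma_pos_of_pos htps
      have := gamma_logconv (u := s) (v := 1 - s) htps hts hs0 (by linarith) (by ring)
      have harg : s * (t + s) + (1 - s) * (t + 1 + s) = t + 1 := by ring
      rw [harg] at this
      have hrec : Real.Gamma (t + 1 + s) = (t + s) * Real.Gamma (t + s) := by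
        rw [show t + 1 + s = t + s + 1 by ring, Real.Gamma_add_one htps.ne']
      have hGdiv : Real.Gamma (t + s) = Real.Gamma (t + 1 + s) / (t + s) := by
        rw [hrec]; field_simp
      have h2 : Real.Gamma (t+s) ^ s * Real.Gamma (t+1+s) ^ (1-s)
          = Real.Gamma (t+1+s) / (t+s) ^ s := by
        rw [hGdiv, Real.div_rpow hGs.le htps.le, div_mul_eq_mul_div,
          ← Real.rpow_add hGs]
        norm_num
      rw [h2] at this
      have hp : (0:ℝ) < (t+s) ^ s := Real.rpow_pos_of_pos htps s
      calc Real.Gamma (t + 1) * (t + s) ^ s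
          ≤ Real.Gamma (t + 1 + s) / (t + s) ^ s * (t + s) ^ s := by
            exact mul_le_mul_of_nonneg_right this hp.le
        _ = Real.Gamma (t + 1 + s) := div_mul_cancel₀ _ hp.ne'
    rw [div_le_iff₀ hGs, Real.div_rpow ht.le htps.le]
    calc t ^ s * Real.Gamma (t + 1)
        = t ^ s / (t + s) ^ s * (Real.Gamma (t + 1) * (t + s) ^ s) := by
          have h1 : (t + s) ^ s ≠ 0 := (Real.rpow_pos_of_pos htps s).ne'
          field_simp
      _ ≤ t ^ s / (t + s) ^ s * Real.Gamma (t + 1 + s) := by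
          apply mul_le_mul_of_nonneg_left L
          positivity

private lemma step_iff (A : ℝ) :
    Tendsto (fun t : ℝ => t ^ (A + 1) * Real.Gamma (t + 1) / Real.Gamma (t + 1 + (A + 1)))
      atTop (nhds 1) ↔
    Tendsto (fun t : ℝ => t ^ A * Real.Gamma (t + 1) / Real.Gamma (t + 1 + A))
      atTop (nhds 1) := by
  have hev : ∀ᶠ t : ℝ in atTop,
      t ^ (A + 1) * Real.Gamma (t + 1) / Real.Gamma (t + 1 + (A + 1))
        = t ^ A * Real.Gamma (t + 1) / Real.Gamma (t + 1 + A) * (t / (t + (1 + A))) := by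
    filter_upwards [eventually_gt_atTop (max 0 (-(1 + A)))] with t ht
    have ht0 : (0:ℝ) < t := lt_of_le_of_lt (le_max_left _ _) ht
    have htA : (0:ℝ) < t + 1 + A := by
      have := lt_of_le_of_lt (le_max_right 0 (-(1 + A))) ht; linarith
    have hG : Real.Gamma (t + 1 + (A + 1)) = (t + 1 + A) * Real.Gamma (t + 1 + A) := by
      rw [show t + 1 + (A + 1) = (t + 1 + A) + 1 by ring, Real.Gamma_add_one htA.ne']
    rw [hG, Real.rpow_add_one ht0.ne' A]
    have hGA : Real.Gamma (t + 1 + A) ≠ 0 := (Real.Gamma_pos_of_pos htA).ne'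
    rw [div_mul_div_comm, show t + (1 + A) = t + 1 + A by ring]
    rw [div_eq_div_iff (mul_ne_zero htA.ne' hGA) (mul_ne_zero hGA htA.ne')]
    ring
  constructor
  · intro h
    have h2 : Tendsto (fun t : ℝ =>
        t ^ (A + 1) * Real.Gamma (t + 1) / Real.Gamma (t + 1 + (A + 1)) * ((t + (1 + A)) / t))
        atTop (nhds 1) := by
      simpa using h.mul (tendsto_add_div (1 + A))
    refine h2.congr' ?_
    filter_upwards [hev, eventually_gt_atTop (max 0 (-(1 + A)))] with t heq ht
    have ht0 : (0:ℝ) < t := lt_of_le_of_lt (le_max_left _ _) ht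
    have htA : (0:ℝ) < t + (1 + A) := by
      have := lt_of_le_of_lt (le_max_right 0 (-(1 + A))) ht; linarith
    rw [heq, mul_assoc, div_mul_div_comm, mul_comm t (t + (1 + A)),
      div_self (by positivity : (t + (1 + A)) * t ≠ 0), mul_one]
  · intro h
    have h2 : Tendsto (fun t : ℝ =>
        t ^ A * Real.Gamma (t + 1) / Real.Gamma (t + 1 + A) * (t / (t + (1 + A))))
        atTop (nhds 1) := by
      simpa using h.mul (tendsto_div_add (1 + A))
    exact h2.congr' (hev.mono fun t h => h.symm)

/-- `t^A Γ(t+1)/Γ(t+1+A) → 1` as `t → +∞`. -/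
theorem tendsto_rpow_mul_Gamma_div_Gamma (A : ℝ) :
    Tendsto (fun t : ℝ => t ^ A * Real.Gamma (t + 1) / Real.Gamma (t + 1 + A))
      atTop (nhds 1) := by
  have key : ∀ n : ℤ, Tendsto (fun t : ℝ =>
      t ^ (Int.fract A + n) * Real.Gamma (t + 1) / Real.Gamma (t + 1 + (Int.fract A + n)))
      atTop (nhds 1) := by
    intro n
    induction n using Int.induction_on with
    | zero => simpa using base_case (Int.fract_nonneg A) (Int.fract_lt_one A).le
    | succ k ih =>
        have := (step_iff (Int.fract A + k)).mpr ih
        convert this using 3 <;> push_cast <;> ring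
    | pred k ih =>
        have := (step_iff (Int.fract A + (-k - 1))).mp (by convert ih using 3 <;> push_cast <;> ring)
        convert this using 3 <;> push_cast <;> ring
  have := key ⌊A⌋
  rwa [Int.fract_add_floor] at this
end

section
/- Let H₁, …, H_p be affine hyperplanes in ℝⁿ in general position, meaning: for every subset J ⊆ {1,…,p} with 1 ≤ |J| ≤ n, the intersection ⋂_{i∈J} H_i is an affine subspace of codimension |J|, and for every J with |J| > n the intersection ⋂_{i∈J} H_i is empty. Then the number of bounded connected components of ℝⁿ ∖ (H₁ ∪ ⋯ ∪ H_p) equals the binomial coefficient C(p−1, n). -/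
set_option linter.unusedSectionVars false
open Set Bornology Filter

variable {V : Type*} [NormedAddCommGroup V] [NormedSpace ℝ V]

lemma ray_closure {C : Set V} (hC : Convex ℝ C) {x₁ w : V}
    (hray : ∀ t : ℝ, 0 ≤ t → x₁ + t • w ∈ closure C) {z : V} (hz : z ∈ closure C)
    {t : ℝ} (ht : 0 ≤ t) : z + t • w ∈ closure C := by
  have hconv : Convex ℝ (closure C) := hC.closure
  have h0 : Tendsto (fun k : ℕ => t / (k + 1 : ℝ)) atTop (nhds 0) := by
    have h1 : Tendsto (fun k : ℕ => ((k:ℝ) + 1)) atTop atTop :=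
      tendsto_natCast_atTop_atTop.atTop_add tendsto_const_nhds
    exact Tendsto.div_atTop tendsto_const_nhds h1
  have hlim : Tendsto (fun k : ℕ => z + t • w + (t / (k + 1 : ℝ)) • (x₁ - z)) atTop
      (nhds (z + t • w)) := by
    have := (h0.smul_const (x₁ - z)).const_add (z + t • w)
    simpa using this
  refine isClosed_closure.mem_of_tendsto hlim ?_
  filter_upwards [eventually_ge_atTop ⌈t⌉₊] with k hk
  have hk1 : (0:ℝ) < (k:ℝ) + 1 := by positivity
  have htk : t ≤ (k:ℝ) + 1 := le_trans (Nat.le_ceil t) (by exact_mod_cast le_trans hk (Nat.le_succ k))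
  have ha0 : 0 ≤ t / ((k:ℝ) + 1) := div_nonneg ht hk1.le
  have ha1 : t / ((k:ℝ) + 1) ≤ 1 := (div_le_one hk1).2 htk
  have := hconv hz (hray ((k:ℝ)+1) hk1.le) (by linarith : (0:ℝ) ≤ 1 - t/((k:ℝ)+1)) ha0 (by ring)
  convert this using 1
  have : (t / ((k:ℝ)+1)) • (((k:ℝ)+1) • w) = t • w := by
    rw [smul_smul]; congr 1; field_simp
  rw [smul_sub, smul_add, smul_smul, sub_smul, one_smul]
  have h2 : t / ((k:ℝ)+1) * ((k:ℝ)+1) = t := by field_simp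
  rw [h2]
  abel

lemma ray_open {C : Set V} (hC : Convex ℝ C) (hO : IsOpen C) {x₁ w : V}
    (hray : ∀ t : ℝ, 0 ≤ t → x₁ + t • w ∈ closure C) {y : V} (hy : y ∈ C)
    {t : ℝ} (ht : 0 ≤ t) : y + t • w ∈ C := by
  have h2 : y + (2 * t) • w ∈ closure C :=
    ray_closure hC hray (subset_closure hy) (by positivity)
  have hyint : y ∈ interior C := by rwa [hO.interior_eq]
  have := hC.combo_interior_closure_mem_interior hyint h2 (by norm_num : (0:ℝ) < 1/2)
    (by norm_num : (0:ℝ) ≤ 1/2) (by norm_num)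
  rw [hO.interior_eq] at this
  convert this using 1
  rw [smul_add, smul_smul]
  rw [show (1/2 : ℝ) * (2 * t) = t by ring]
  module

lemma exists_ray_closure [FiniteDimensional ℝ V] {C : Set V} (hC : Convex ℝ C) {x₀ : V}
    (hx₀ : x₀ ∈ C) (hub : ¬ IsBounded C) :
    ∃ v : V, ‖v‖ = 1 ∧ ∀ t : ℝ, 0 ≤ t → x₀ + t • v ∈ closure C := by
  have hex : ∀ k : ℕ, ∃ x, x ∈ C ∧ (k:ℝ) + 1 + ‖x₀‖ < ‖x‖ := by
    intro k
    by_contra h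
    push_neg at h
    exact hub (isBounded_iff_forall_norm_le.2 ⟨(k:ℝ) + 1 + ‖x₀‖, fun x hx => h x hx⟩)
  choose x hxC hxn using hex
  set d : ℕ → ℝ := fun k => ‖x k - x₀‖ with hd_def
  have hd : ∀ k : ℕ, (k:ℝ) + 1 ≤ d k := by
    intro k
    have h1 : ‖x k‖ - ‖x₀‖ ≤ ‖x k - x₀‖ := by
      have := norm_sub_norm_le (x k) x₀; linarith
    have h2 := hxn k
    simp only [hd_def]; linarith
  have hd0 : ∀ k, 0 < d k := fun k => lt_of_lt_of_le (by positivity) (hd k)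
  set u : ℕ → V := fun k => (d k)⁻¹ • (x k - x₀) with hu_def
  have hun : ∀ k, u k ∈ Metric.sphere (0:V) 1 := by
    intro k
    simp only [mem_sphere_iff_norm, sub_zero, hu_def, norm_smul, norm_inv, Real.norm_eq_abs,
      abs_of_pos (hd0 k)]
    exact inv_mul_cancel₀ (hd0 k).ne'
  obtain ⟨v, hv, φ, hφ, hconv⟩ := (isCompact_sphere (0:V) 1).tendsto_subseq hun
  refine ⟨v, by simpa using hv, fun t ht => ?_⟩
  have hlim : Tendsto (fun k : ℕ => x₀ + t • u (φ k)) atTop (nhds (x₀ + t • v)) := by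
    exact tendsto_const_nhds.add ((hconv.const_smul t))
  refine mem_closure_of_tendsto hlim ?_
  filter_upwards [eventually_ge_atTop ⌈t⌉₊] with k hk
  have htd : t ≤ d (φ k) := by
    have h1 : (k:ℝ) ≤ (φ k : ℝ) := by exact_mod_cast hφ.le_apply
    have h2 : t ≤ (k:ℝ) := le_trans (Nat.le_ceil t) (by exact_mod_cast hk)
    linarith [hd (φ k)]
  have h01 : t / d (φ k) ∈ Icc (0:ℝ) 1 :=
    ⟨div_nonneg ht (hd0 _).le, (div_le_one (hd0 _)).2 htd⟩
  have hmem : (1 - t / d (φ k)) • x₀ + (t / d (φ k)) • (x (φ k)) ∈ C :=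
    hC hx₀ (hxC (φ k)) (by linarith [h01.2]) h01.1 (by ring)
  have heq : (1 - t / d (φ k)) • x₀ + (t / d (φ k)) • (x (φ k)) = x₀ + t • u (φ k) := by
    simp only [hu_def, smul_smul, div_eq_mul_inv]
    module
  exact heq ▸ hmem

lemma exists_ray [FiniteDimensional ℝ V] {C : Set V} (hC : Convex ℝ C) (hO : IsOpen C)
    (hub : ¬ IsBounded C) :
    ∃ v : V, ‖v‖ = 1 ∧ ∀ y ∈ C, ∀ t : ℝ, 0 ≤ t → y + t • v ∈ C := by
  have hne : C.Nonempty := by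
    rcases C.eq_empty_or_nonempty with h | h
    · exact absurd (h ▸ isBounded_empty) hub
    · exact h
  obtain ⟨x₀, hx₀⟩ := hne
  obtain ⟨v, hv1, hray⟩ := exists_ray_closure hC hx₀ hub
  exact ⟨v, hv1, fun y hy t ht => ray_open hC hO hray hy ht⟩

lemma not_isBounded_of_ray {S : Set V} {x v : V} (hx : x ∈ S) (hv : v ≠ 0)
    (h : ∀ t : ℝ, 0 ≤ t → x + t • v ∈ S) : ¬ IsBounded S := by
  intro hb
  obtain ⟨c, hc⟩ := isBounded_iff_forall_norm_le.1 hb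
  have hvn : 0 < ‖v‖ := norm_pos_iff.2 hv
  set t := (c + ‖x‖ + 1) / ‖v‖ with ht_def
  have hc0 : 0 ≤ c := le_trans (norm_nonneg x) (hc x hx)
  have ht0 : 0 ≤ t := by positivity
  have hmem := h t ht0
  have h1 : ‖x + t • v‖ ≤ c := hc _ hmem
  have h2 : ‖t • v‖ ≤ ‖x + t • v‖ + ‖x‖ := by
    have := norm_sub_le (x + t • v) x
    simpa using this
  have h3 : ‖t • v‖ = c + ‖x‖ + 1 := by
    rw [norm_smul, Real.norm_eq_abs, abs_of_nonneg ht0, ht_def, div_mul_cancel₀ _ hvn.ne']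
  linarith

/-- An affine function with no zeros on a convex set can't take both signs. -/
lemma sign_exists_zero {C : Set V} (hC : Convex ℝ C) (g : V →ᵃ[ℝ] ℝ) {x y : V}
    (hx : x ∈ C) (hy : y ∈ C) (hgx : 0 < g x) (hgy : g y < 0) :
    ∃ z ∈ C, g z = 0 := by
  set t := g x / (g x - g y) with ht_def
  have hd : 0 < g x - g y := by linarith
  have ht0 : 0 ≤ t := le_of_lt (div_pos hgx hd)
  have ht1 : t ≤ 1 := by rw [ht_def, div_le_one hd]; linarith
  refine ⟨AffineMap.lineMap x y t, hC.lineMap_mem hx hy ⟨ht0, ht1⟩, ?_⟩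
  rw [AffineMap.apply_lineMap, AffineMap.lineMap_apply]
  simp only [vsub_eq_sub, vadd_eq_add, smul_eq_mul, ht_def]
  field_simp
  ring

lemma nonempty_of_not_isBounded' {S : Set V} (h : ¬ IsBounded S) : S.Nonempty := by
  rcases S.eq_empty_or_nonempty with hS | hS
  · exact absurd (hS ▸ isBounded_empty) h
  · exact hS

lemma affine_apply_smul_add (g : V →ᵃ[ℝ] ℝ) (x v : V) (t : ℝ) :
    g (x + t • v) = g x + t * g.linear v := by
  have := g.map_vadd x (t • v)
  simpa [add_comm, mul_comm] using this

lemma affine_apply_add (g : V →ᵃ[ℝ] ℝ) (x v : V) : g (x + v) = g x + g.linear v := by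
  simpa using affine_apply_smul_add g x v 1

lemma bddSide [FiniteDimensional ℝ V] {C : Set V} (hC : Convex ℝ C) (hO : IsOpen C)
    (g : V →ᵃ[ℝ] ℝ)
    (hDb : IsBounded (C ∩ {y | g y = 0}))
    (hnl : ∀ w : V, w ≠ 0 → (∀ y ∈ C, ∀ t : ℝ, y + t • w ∈ C) → False)
    {x v : V} (hx : x ∈ C) (hgx : g x = 0)
    (hv : ∀ y ∈ C, ∀ t : ℝ, 0 ≤ t → y + t • v ∈ C)
    (hav : 0 < g.linear v) :
    IsBounded (C ∩ {y | g y < 0}) := by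
  by_contra hub
  set S := C ∩ {y | g y < 0} with hS_def
  have hSsub : S ⊆ C := inter_subset_left
  have hSconv : Convex ℝ S := hC.inter ((convex_Iio (0:ℝ)).affine_preimage g)
  have hSopen : IsOpen S :=
    hO.inter (isOpen_Iio.preimage g.continuous_of_finiteDimensional)
  obtain ⟨x₁, hx₁⟩ := nonempty_of_not_isBounded' hub
  obtain ⟨w, hw1, hw⟩ := exists_ray hSconv hSopen hub
  have hw0 : w ≠ 0 := by intro h; rw [h] at hw1; simp at hw1
  have hwC : ∀ y ∈ C, ∀ t : ℝ, 0 ≤ t → y + t • w ∈ C := by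
    intro y hy t ht
    exact ray_open hC hO (fun s hs => subset_closure (hSsub (hw x₁ hx₁ s hs))) hy ht
  have hgx₁ : g x₁ < 0 := hx₁.2
  have haw : g.linear w ≤ 0 := by
    by_contra h
    push_neg at h
    have ht0 : 0 ≤ (1 - g x₁) / g.linear w := by
      apply div_nonneg _ h.le; linarith
    have hmem := hw x₁ hx₁ _ ht0
    have := hmem.2
    simp only [mem_setOf_eq] at this
    rw [affine_apply_smul_add, div_mul_cancel₀ _ h.ne'] at this
    linarith
  rcases haw.lt_or_eq with hawlt | haweq
  · -- g.linear w < 0 : build far away points on the hyperplane inside C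
    set A := g.linear v with hA_def
    set Bw := g.linear w with hB_def
    set lam := -Bw / (A - Bw) with hlam_def
    have hAB : 0 < A - Bw := by simp only [hA_def, hB_def] at *; linarith
    have hlam0 : 0 < lam := div_pos (by linarith) hAB
    have hlam1 : lam < 1 := by rw [hlam_def, div_lt_one hAB]; linarith
    have hlin : lam * A + (1 - lam) * Bw = 0 := by
      rw [hlam_def]; field_simp; ring
    set c := -(g x₁) / Bw with hc_def
    have hcneg : c < 0 := div_neg_of_pos_of_neg (by linarith) hawlt
    have hcB : g x₁ + c * Bw = 0 := by
      rw [hc_def, div_mul_cancel₀ _ hawlt.ne]; ring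
    set u := lam • v + (1 - lam) • w with hu_def
    by_cases hu0 : u = 0
    · -- C contains a full line in direction v : contradiction
      have hv0 : v ≠ 0 := by
        intro h; rw [hA_def, h] at hav; simp at hav
      have h1m : (0:ℝ) < 1 - lam := by linarith
      have hwv : w = (-(lam / (1 - lam))) • v := by
        have h2 : lam • v + (1 - lam) • w = 0 := by rw [← hu_def]; exact hu0
        have h1 : (1 - lam) • w = (-lam) • v := by
          rw [neg_smul]; exact eq_neg_of_add_eq_zero_right h2
        calc w = (1 - lam)⁻¹ • ((1 - lam) • w) := by
                rw [smul_smul, inv_mul_cancel₀ h1m.ne', one_smul]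
          _ = (1 - lam)⁻¹ • ((-lam) • v) := by rw [h1]
          _ = (-(lam / (1 - lam))) • v := by
                rw [smul_smul]; congr 1; field_simp
      refine hnl v hv0 ?_
      intro y hy t
      rcases le_or_gt 0 t with h | h
      · exact hv y hy t h
      · have hspos : 0 ≤ -t * (1 - lam) / lam :=
          div_nonneg (mul_nonneg (by linarith) h1m.le) hlam0.le
        have hmem := hwC y hy (-t * (1 - lam) / lam) hspos
        have heq : t • v = (-t * (1 - lam) / lam) • w := by
          rw [hwv, smul_smul]; congr 1; field_simp
        rw [heq]; exact hmem
    · obtain ⟨cb, hcb⟩ := isBounded_iff_forall_norm_le.1 hDb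
      set base := lam • x + (1 - lam) • (x₁ + c • w) with hbase_def
      have hun : 0 < ‖u‖ := norm_pos_iff.2 hu0
      set s := max (-c) ((cb + ‖base‖ + 1) / ‖u‖) with hs_def
      have hs1 : -c ≤ s := le_max_left _ _
      have hs2 : (cb + ‖base‖ + 1) / ‖u‖ ≤ s := le_max_right _ _
      have hs0 : 0 ≤ s := by linarith
      have hsc : 0 ≤ s + c := by linarith
      have hp : x + s • v ∈ C := hv x hx s hs0
      have hq : x₁ + (s + c) • w ∈ C := hwC x₁ hx₁.1 _ hsc
      set z := lam • (x + s • v) + (1 - lam) • (x₁ + (s + c) • w) with hz_def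
      have hzC : z ∈ C := hC hp hq hlam0.le (by linarith) (by ring)
      have hgp : g (x + s • v) = s * A := by rw [affine_apply_smul_add, hgx, zero_add]
      have hgq : g (x₁ + (s + c) • w) = g x₁ + (s + c) * Bw := by
        rw [affine_apply_smul_add]
      have hgz : g z = 0 := by
        have hline : z = AffineMap.lineMap (x₁ + (s + c) • w) (x + s • v) lam := by
          rw [AffineMap.lineMap_apply]
          simp only [vsub_eq_sub, vadd_eq_add, hz_def]
          module
        rw [hline, AffineMap.apply_lineMap, AffineMap.lineMap_apply]
        simp only [vsub_eq_sub, vadd_eq_add, smul_eq_mul, hgp, hgq]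
        nlinarith [hlin, hcB]
      have hzval := hcb z ⟨hzC, hgz⟩
      have hzeq : z = base + s • u := by
        rw [hz_def, hbase_def, hu_def]; module
      have h1 : s * ‖u‖ ≤ ‖z‖ + ‖base‖ := by
        have : ‖s • u‖ ≤ ‖z‖ + ‖base‖ := by
          rw [show s • u = z - base by rw [hzeq]; abel]
          exact norm_sub_le _ _
        rwa [norm_smul, Real.norm_eq_abs, abs_of_nonneg hs0] at this
      have h2 : cb + ‖base‖ + 1 ≤ s * ‖u‖ := (div_le_iff₀ hun).1 hs2
      linarith
  · -- g.linear w = 0 : the hyperplane piece is unbounded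
    refine not_isBounded_of_ray (x := x) (v := w) (mem_inter hx (by simpa using hgx)) hw0 ?_ hDb
    intro t ht
    refine mem_inter (hwC x hx t ht) ?_
    simp only [mem_setOf_eq]
    rw [affine_apply_smul_add, hgx, haweq]
    ring

open scoped Classical

def BRcell {p : ℕ} (f : Fin p → V →ᵃ[ℝ] ℝ) (σ : Fin p → Bool) : Set V :=
  {x | ∀ i, if σ i then 0 < f i x else f i x < 0}

lemma convex_BRcell {p : ℕ} (f : Fin p → V →ᵃ[ℝ] ℝ) (σ : Fin p → Bool) :
    Convex ℝ (BRcell f σ) := by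
  have h : BRcell f σ = ⋂ i, f i ⁻¹' (if σ i then Ioi 0 else Iio 0) := by
    ext x
    simp only [BRcell, mem_setOf_eq, mem_iInter, mem_preimage]
    refine forall_congr' fun i => ?_
    cases σ i <;> simp
  rw [h]
  exact convex_iInter fun i => by
    cases σ i
    · simpa using (convex_Iio (0:ℝ)).affine_preimage (f i)
    · simpa using (convex_Ioi (0:ℝ)).affine_preimage (f i)

lemma isOpen_BRcell [FiniteDimensional ℝ V] {p : ℕ} (f : Fin p → V →ᵃ[ℝ] ℝ)
    (σ : Fin p → Bool) : IsOpen (BRcell f σ) := by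
  have h : BRcell f σ = ⋂ i, f i ⁻¹' (if σ i then Ioi 0 else Iio 0) := by
    ext x
    simp only [BRcell, mem_setOf_eq, mem_iInter, mem_preimage]
    refine forall_congr' fun i => ?_
    cases σ i <;> simp
  rw [h]
  exact isOpen_iInter_of_finite fun i => by
    cases σ i
    · simpa using isOpen_Iio.preimage (f i).continuous_of_finiteDimensional
    · simpa using isOpen_Ioi.preimage (f i).continuous_of_finiteDimensional

lemma BRkey [FiniteDimensional ℝ V] {m : ℕ} (f : Fin (m + 1) → V →ᵃ[ℝ] ℝ)
    (hal : (f (Fin.last m)).linear ≠ 0)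
    (hker : ∀ w : V, w ≠ 0 → (∀ i : Fin m, (f (Fin.castSucc i)).linear w = 0) → False)
    (σ' : Fin m → Bool) :
    ((if (BRcell f (Fin.snoc σ' true)).Nonempty ∧ IsBounded (BRcell f (Fin.snoc σ' true))
        then 1 else 0) +
      (if (BRcell f (Fin.snoc σ' false)).Nonempty ∧ IsBounded (BRcell f (Fin.snoc σ' false))
        then 1 else 0) : ℕ) =
    (if (BRcell (fun i => f i.castSucc) σ').Nonempty ∧
        IsBounded (BRcell (fun i => f i.castSucc) σ') then 1 else 0) +
      (if (BRcell (fun i => f i.castSucc) σ' ∩ {x | f (Fin.last m) x = 0}).Nonempty ∧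
        IsBounded (BRcell (fun i => f i.castSucc) σ' ∩ {x | f (Fin.last m) x = 0})
        then 1 else 0) := by
  set l := Fin.last m with hl_def
  set C := BRcell (fun i : Fin m => f i.castSucc) σ' with hC_def
  set D := C ∩ {x | f l x = 0} with hD_def
  have hCconv : Convex ℝ C := convex_BRcell _ _
  have hCopen : IsOpen C := isOpen_BRcell _ _
  have hcell : ∀ s : Bool,
      BRcell f (Fin.snoc σ' s) = C ∩ {x | if s then 0 < f l x else f l x < 0} := by
    intro s
    ext x
    simp only [BRcell, mem_setOf_eq, mem_inter_iff, hC_def]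
    rw [Fin.forall_fin_succ']
    simp only [Fin.snoc_castSucc, Fin.snoc_last, hl_def]
  -- a nonzero direction for f last
  have hlv : ∃ v₀ : V, (f l).linear v₀ = 1 := by
    have : ∃ u, (f l).linear u ≠ 0 := by
      by_contra h
      push_neg at h
      exact hal (LinearMap.ext fun u => by simpa using h u)
    obtain ⟨u, hu⟩ := this
    exact ⟨((f l).linear u)⁻¹ • u, by rw [map_smul, smul_eq_mul, inv_mul_cancel₀ hu]⟩
  -- no full line can be contained in C (given C nonempty)
  have hnl : C.Nonempty → ∀ w : V, w ≠ 0 → (∀ y ∈ C, ∀ t : ℝ, y + t • w ∈ C) → False := by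
    rintro ⟨y, hy⟩ w hw0 hline
    refine hker w hw0 fun i => ?_
    by_contra h
    set t := -(f i.castSucc y) / ((f i.castSucc).linear w) with ht_def
    have hyt : y + t • w ∈ C := hline y hy t
    have hzero : f i.castSucc (y + t • w) = 0 := by
      rw [affine_apply_smul_add, ht_def, div_mul_cancel₀ _ h]
      ring
    have hmem := hyt i
    cases hσ : σ' i <;> rw [hσ] at hmem <;> simp only [if_true, if_false] at hmem <;>
      rw [hzero] at hmem <;> exact lt_irrefl 0 hmem
  -- both sides are nonempty as soon as D is nonempty
  have hbn : D.Nonempty → ∀ s : Bool, (BRcell f (Fin.snoc σ' s)).Nonempty := by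
    rintro ⟨x, hxC, hxH⟩ s
    obtain ⟨v₀, hv₀⟩ := hlv
    obtain ⟨ε, hε, hball⟩ := Metric.isOpen_iff.1 hCopen x hxC
    set δ := ε / (2 * (‖v₀‖ + 1)) with hδ_def
    have hv₀n : 0 ≤ ‖v₀‖ := norm_nonneg _
    have hδ0 : 0 < δ := by positivity
    have hδv : ‖(if s then δ else -δ) • v₀‖ < ε := by
      rw [norm_smul, Real.norm_eq_abs]
      have h1 : |if s then δ else -δ| = δ := by cases s <;> simp [abs_of_pos hδ0]
      rw [h1, hδ_def]
      rw [div_mul_eq_mul_div, div_lt_iff₀ (by positivity)]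
      nlinarith
    have hmem : x + (if s then δ else -δ) • v₀ ∈ C := by
      apply hball
      rw [Metric.mem_ball, dist_eq_norm]
      simpa using hδv
    refine ⟨x + (if s then δ else -δ) • v₀, ?_⟩
    rw [hcell s]
    refine mem_inter hmem ?_
    have hval : f l (x + (if s then δ else -δ) • v₀) = (if s then δ else -δ) := by
      rw [affine_apply_smul_add, hv₀, mul_one]
      simp only [mem_setOf_eq] at hxH
      rw [hxH, zero_add]
    simp only [mem_setOf_eq, hval]
    cases s <;> simp [hδ0, neg_neg, neg_lt_zero]
  by_cases hCne : C.Nonempty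
  · by_cases hDne : D.Nonempty
    · by_cases hCb : IsBounded C
      · have hne := hbn hDne
        have hsb : ∀ s : Bool, IsBounded (BRcell f (Fin.snoc σ' s)) := fun s =>
          hCb.subset (by rw [hcell s]; exact inter_subset_left)
        have hDb : IsBounded D := hCb.subset inter_subset_left
        simp [hne true, hne false, hsb true, hsb false, hCne, hCb, hDne, hDb]
      · by_cases hDb : IsBounded D
        · -- exactly one side bounded
          obtain ⟨v, hv1, hv⟩ := exists_ray hCconv hCopen hCb
          obtain ⟨x, hxD⟩ := hDne
          have hv0 : v ≠ 0 := by intro h; rw [h] at hv1; simp at hv1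
          have hav : (f l).linear v ≠ 0 := by
            intro h
            refine not_isBounded_of_ray (x := x) (v := v)
              (mem_inter hxD.1 hxD.2) hv0 (fun t ht => ?_) hDb
            refine mem_inter (hv x hxD.1 t ht) ?_
            simp only [mem_setOf_eq]
            rw [affine_apply_smul_add, h, mul_zero, add_zero]
            simpa using hxD.2
          have hnotboth : ¬ (IsBounded (BRcell f (Fin.snoc σ' true)) ∧
              IsBounded (BRcell f (Fin.snoc σ' false))) := by
            rintro ⟨h1, h2⟩
            refine hCb (((h1.union h2).union hDb).subset fun y hy => ?_)
            rcases lt_trichotomy (f l y) 0 with h | h | h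
            · exact Or.inl (Or.inr (by rw [hcell false]; exact mem_inter hy (by simpa using h)))
            · exact Or.inr (mem_inter hy (by simpa using h))
            · exact Or.inl (Or.inl (by rw [hcell true]; exact mem_inter hy (by simpa using h)))
          have honeside : IsBounded (BRcell f (Fin.snoc σ' false)) ∨
              IsBounded (BRcell f (Fin.snoc σ' true)) := by
            rcases hav.lt_or_gt with hneg | hpos
            · right
              have hb := bddSide hCconv hCopen (-(f l))
                (by
                  have : C ∩ {y | (-(f l)) y = 0} = D := by
                    rw [hD_def]; congr 1; ext y; simp
                  rw [this]; exact hDb)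
                (hnl hCne) hxD.1 (by simpa using hxD.2) hv
                (by simpa using neg_pos.2 hneg)
              have heq : C ∩ {y | (-(f l)) y < 0} = BRcell f (Fin.snoc σ' true) := by
                rw [hcell true]; congr 1; ext y; simp
              rwa [heq] at hb
            · left
              have hb := bddSide hCconv hCopen (f l) hDb (hnl hCne) hxD.1
                (by simpa using hxD.2) hv hpos
              have heq : C ∩ {y | f l y < 0} = BRcell f (Fin.snoc σ' false) := by
                rw [hcell false]
                norm_num
              rwa [heq] at hb
          have hDne' : D.Nonempty := ⟨x, hxD⟩
          have hne := hbn hDne'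
          rcases honeside with h | h
          · have h2 : ¬ IsBounded (BRcell f (Fin.snoc σ' true)) := fun hh => hnotboth ⟨hh, h⟩
            simp [hne true, hne false, h, h2, hCb, hCne, hDne', hDb]
          · have h2 : ¬ IsBounded (BRcell f (Fin.snoc σ' false)) := fun hh => hnotboth ⟨h, hh⟩
            simp [hne true, hne false, h, h2, hCb, hCne, hDne', hDb]
        · -- D unbounded : everything unbounded
          have hDconv : Convex ℝ D := by
            refine hCconv.inter ?_
            have : {x : V | f l x = 0} = f l ⁻¹' {0} := by ext y; simp
            rw [this]
            exact (convex_singleton (0:ℝ)).affine_preimage _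
          obtain ⟨x, hxD⟩ := hDne
          obtain ⟨v, hv1, hvD⟩ := exists_ray_closure hDconv hxD hDb
          have hv0 : v ≠ 0 := by intro h; rw [h] at hv1; simp at hv1
          have hvC : ∀ y ∈ C, ∀ t : ℝ, 0 ≤ t → y + t • v ∈ C := fun y hy t ht =>
            ray_open hCconv hCopen
              (fun s hs => closure_mono inter_subset_left (hvD s hs)) hy ht
          have hclosed : IsClosed {x : V | f l x = 0} := by
            have : {x : V | f l x = 0} = f l ⁻¹' {0} := by ext y; simp
            rw [this]
            exact isClosed_singleton.preimage (f l).continuous_of_finiteDimensional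
          have hlv0 : (f l).linear v = 0 := by
            have h1 : x + (1:ℝ) • v ∈ closure D := hvD 1 zero_le_one
            have h2 : closure D ⊆ {x | f l x = 0} :=
              closure_minimal inter_subset_right hclosed
            have h3 := h2 h1
            simp only [mem_setOf_eq, one_smul] at h3
            rw [affine_apply_add] at h3
            have h4 : f l x = 0 := hxD.2
            linarith
          have hunb : ∀ s : Bool, ¬ IsBounded (BRcell f (Fin.snoc σ' s)) := by
            intro s
            obtain ⟨y, hy⟩ := hbn ⟨x, hxD⟩ s
            refine not_isBounded_of_ray hy hv0 fun t ht => ?_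
            rw [hcell s] at hy ⊢
            refine mem_inter (hvC y hy.1 t ht) ?_
            have := hy.2
            simp only [mem_setOf_eq] at this ⊢
            rw [affine_apply_smul_add, hlv0, mul_zero, add_zero]
            exact this
          simp [hunb true, hunb false, hCb, hDb]
    · -- D empty : f l has constant sign on C
      have hallne : ∀ x ∈ C, f l x ≠ 0 := fun x hx h => hDne ⟨x, hx, h⟩
      obtain ⟨xb, hxb⟩ := hCne
      have hCne' : C.Nonempty := ⟨xb, hxb⟩
      have hDemp : ¬ (D.Nonempty ∧ IsBounded D) := fun h => hDne h.1
      rcases (hallne xb hxb).lt_or_gt with hneg | hpos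
      · have hsign : ∀ y ∈ C, f l y < 0 := by
          intro y hy
          rcases (hallne y hy).lt_or_gt with h | h
          · exact h
          obtain ⟨z, hz, hz0⟩ := sign_exists_zero hCconv (f l) hy hxb h hneg
          exact absurd hz0 (hallne z hz)
        have hPf : BRcell f (Fin.snoc σ' false) = C := by
          rw [hcell false]
          exact inter_eq_left.2 fun y hy => by simpa using hsign y hy
        have hPt : BRcell f (Fin.snoc σ' true) = ∅ := by
          rw [hcell true]
          refine eq_empty_of_forall_notMem fun y hy => ?_
          have h1 := hsign y hy.1
          have h2 := hy.2
          simp only [mem_setOf_eq] at h2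
          norm_num at h2
          linarith
        rw [hPf, hPt]
        simp [hDemp, hCne']
      · have hsign : ∀ y ∈ C, 0 < f l y := by
          intro y hy
          rcases (hallne y hy).lt_or_gt with h | h
          · obtain ⟨z, hz, hz0⟩ := sign_exists_zero hCconv (f l) hxb hy hpos h
            exact absurd hz0 (hallne z hz)
          · exact h
        have hPt : BRcell f (Fin.snoc σ' true) = C := by
          rw [hcell true]
          exact inter_eq_left.2 fun y hy => by simpa using hsign y hy
        have hPf : BRcell f (Fin.snoc σ' false) = ∅ := by
          rw [hcell false]
          refine eq_empty_of_forall_notMem fun y hy => ?_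
          have h1 := hsign y hy.1
          have h2 := hy.2
          simp only [mem_setOf_eq] at h2
          norm_num at h2
          linarith
        rw [hPt, hPf]
        simp [hDemp, hCne']
  · -- C empty
    have hCemp : C = ∅ := not_nonempty_iff_eq_empty.1 hCne
    have h1 : ∀ s : Bool, BRcell f (Fin.snoc σ' s) = ∅ := by
      intro s
      rw [hcell s, hCemp, empty_inter]
    have h2 : D = ∅ := by rw [hD_def, hCemp, empty_inter]
    rw [h1 true, h1 false, h2, hCemp]

def BRGP {p : ℕ} (n : ℕ) (f : Fin p → V →ᵃ[ℝ] ℝ) : Prop :=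
  (∀ J : Finset (Fin p), J.card ≤ n →
    (∃ x, ∀ i ∈ J, f i x = 0) ∧
      Module.finrank ℝ ↥(⨅ i ∈ J, LinearMap.ker (f i).linear) = n - J.card) ∧
  (∀ J : Finset (Fin p), n < J.card → ¬∃ x, ∀ i ∈ J, f i x = 0)

lemma iInf_map_castSucc {m : ℕ} (K : Fin (m + 1) → Submodule ℝ V) (J : Finset (Fin m)) :
    (⨅ i ∈ J.map Fin.castSuccEmb, K i) = ⨅ j ∈ J, K j.castSucc := by
  ext x
  simp only [Submodule.mem_iInf, Finset.mem_map]
  constructor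
  · intro h j hj
    exact h _ ⟨j, hj, rfl⟩
  · rintro h i ⟨j, hj, rfl⟩
    exact h j hj

lemma BRGP.delete {m n : ℕ} {f : Fin (m + 1) → V →ᵃ[ℝ] ℝ} (h : BRGP n f) :
    BRGP n (fun i : Fin m => f i.castSucc) := by
  constructor
  · intro J hJ
    obtain ⟨⟨x, hx⟩, hrk2⟩ := h.1 (J.map Fin.castSuccEmb) (by rwa [Finset.card_map])
    refine ⟨⟨x, fun i hi => hx _ (Finset.mem_map_of_mem _ hi)⟩, ?_⟩
    rw [← iInf_map_castSucc (fun i => LinearMap.ker (f i).linear) J]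
    rw [hrk2, Finset.card_map]
  · rintro J hJ ⟨x, hx⟩
    refine h.2 (J.map Fin.castSuccEmb) (by rwa [Finset.card_map]) ⟨x, ?_⟩
    rintro i hi
    obtain ⟨j, hj, rfl⟩ := Finset.mem_map.1 hi
    exact hx j hj

lemma BRGP.noline [FiniteDimensional ℝ V] {p n : ℕ} {f : Fin p → V →ᵃ[ℝ] ℝ}
    (h : BRGP n f) (hpn : n ≤ p) :
    ∀ w : V, w ≠ 0 → (∀ i, (f i).linear w = 0) → False := by
  intro w hw0 hw
  obtain ⟨J, _, hJcard⟩ := Finset.exists_subset_card_eq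
    (s := (Finset.univ : Finset (Fin p))) (n := n) (by simpa using hpn)
  have h2 := (h.1 J hJcard.le).2
  have hbot : (⨅ i ∈ J, LinearMap.ker (f i).linear) = ⊥ :=
    Submodule.finrank_eq_zero.1 (by rw [h2, hJcard, Nat.sub_self])
  have hwmem : w ∈ ⨅ i ∈ J, LinearMap.ker (f i).linear := by
    simp only [Submodule.mem_iInf]
    intro i _
    exact LinearMap.mem_ker.2 (hw i)
  rw [hbot] at hwmem
  exact hw0 ((Submodule.mem_bot ℝ).1 hwmem)

def BRsnocEquiv (m : ℕ) : ((Fin m → Bool) × Bool) ≃ (Fin (m + 1) → Bool) where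
  toFun x := Fin.snoc x.1 x.2
  invFun σ := (Fin.init σ, σ (Fin.last m))
  left_inv x := by
    ext
    · simp [Fin.init_snoc]
    · simp [Fin.snoc_last]
  right_inv σ := Fin.snoc_init_self σ


set_option maxHeartbeats 1000000 in
theorem BRcount (p : ℕ) :
    ∀ (n : ℕ) (W : Type) [NormedAddCommGroup W] [NormedSpace ℝ W] [FiniteDimensional ℝ W]
      (f : Fin p → W →ᵃ[ℝ] ℝ), Module.finrank ℝ W = n → BRGP n f →
      (Finset.univ.filter fun σ : Fin p → Bool =>
          (BRcell f σ).Nonempty ∧ IsBounded (BRcell f σ)).card = (p - 1).choose n := by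
  induction p with
  | zero =>
    intro n W _ _ _ f hrk hGP
    have hcell : ∀ σ : Fin 0 → Bool, BRcell f σ = univ := by
      intro σ
      ext x
      simp [BRcell]
    cases n with
    | zero =>
      have hsub : Subsingleton W := Module.finrank_zero_iff.1 hrk
      have hbd : IsBounded (univ : Set W) := by
        refine isBounded_iff_forall_norm_le.2 ⟨0, fun x _ => ?_⟩
        have : x = 0 := Subsingleton.elim x 0
        simp [this]
      have : (Finset.univ.filter fun σ : Fin 0 → Bool =>
          (BRcell f σ).Nonempty ∧ IsBounded (BRcell f σ)) = Finset.univ := by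
        refine Finset.filter_true_of_mem fun σ _ => ?_
        rw [hcell σ]
        exact ⟨univ_nonempty, hbd⟩
      rw [this]
      simp
    | succ n' =>
      have hnt : Nontrivial W := by
        rw [← not_subsingleton_iff_nontrivial]
        intro hs
        rw [Module.finrank_zero_iff.2 hs] at hrk
        omega
      obtain ⟨v, hv⟩ := exists_ne (0 : W)
      have hub : ¬ IsBounded (univ : Set W) :=
        not_isBounded_of_ray (x := 0) (mem_univ _) hv (fun t _ => mem_univ _)
      have : (Finset.univ.filter fun σ : Fin 0 → Bool =>
          (BRcell f σ).Nonempty ∧ IsBounded (BRcell f σ)) = ∅ := by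
        refine Finset.filter_false_of_mem fun σ _ => ?_
        rw [hcell σ]
        rintro ⟨-, hb⟩
        exact hub hb
      rw [this]
      simp [Nat.choose_eq_zero_of_lt (Nat.succ_pos n')]
  | succ m ih =>
    intro n W _ _ _ f hrk hGP
    rcases Nat.eq_zero_or_pos n with hn0 | hn1
    · -- n = 0 : W is a point
      subst hn0
      have hsub : Subsingleton W := Module.finrank_zero_iff.1 hrk
      have hne0 : ∀ i x, f i x ≠ 0 := by
        intro i x h
        refine hGP.2 {i} (by simp) ⟨x, ?_⟩
        intro j hj
        rw [Finset.mem_singleton.1 hj]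
        exact h
      set σstar : Fin (m + 1) → Bool := fun i => decide (0 < f i 0) with hσ_def
      have hbd : ∀ S : Set W, IsBounded S := by
        intro S
        refine isBounded_iff_forall_norm_le.2 ⟨0, fun x _ => ?_⟩
        have : x = 0 := Subsingleton.elim x 0
        simp [this]
      have hstar : (BRcell f σstar).Nonempty := by
        refine ⟨0, fun i => ?_⟩
        rcases (hne0 i 0).lt_or_gt with h | h
        · have : σstar i = false := by
            simp only [hσ_def, decide_eq_false_iff_not]
            exact fun hh => absurd h (not_lt.2 hh.le)
          rw [this]
          simpa using h
        · have : σstar i = true := by simp [hσ_def, h]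
          rw [this]
          simpa using h
      have hkey : (Finset.univ.filter fun σ : Fin (m + 1) → Bool =>
          (BRcell f σ).Nonempty ∧ IsBounded (BRcell f σ)) = {σstar} := by
        ext σ
        simp only [Finset.mem_filter, Finset.mem_univ, true_and, Finset.mem_singleton]
        constructor
        · rintro ⟨⟨x, hx⟩, -⟩
          have hx0 : x = 0 := Subsingleton.elim x 0
          subst hx0
          funext i
          have := hx i
          rcases (hne0 i 0).lt_or_gt with h | h
          · have hσ : σ i ≠ true := by
              intro hh
              rw [hh] at this
              simp only [if_true] at this
              linarith
            have h2 : σstar i = false := by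
              simp only [hσ_def, decide_eq_false_iff_not]
              exact fun hh => absurd h (not_lt.2 hh.le)
            rw [h2]
            exact Bool.not_eq_true _ ▸ hσ
          · have hσ : σ i = true := by
              by_contra hh
              rw [Bool.not_eq_true] at hh
              rw [hh] at this
              simp only [Bool.false_eq_true, if_false] at this
              linarith
            rw [hσ]
            simp [hσ_def, h]
        · rintro rfl
          exact ⟨hstar, hbd _⟩
      rw [hkey]
      simp
    · -- n ≥ 1
      by_cases hpn : m < n
      · -- p = m+1 ≤ n : no bounded cells
        have hchoose : (m + 1 - 1).choose n = 0 := by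
          simp only [Nat.add_sub_cancel]
          exact Nat.choose_eq_zero_of_lt hpn
        rw [hchoose]
        rw [Finset.card_eq_zero]
        refine Finset.filter_false_of_mem fun σ _ => ?_
        rintro ⟨⟨x, hx⟩, hbσ⟩
        -- find an escape direction
        have hesc : ∃ v : W, v ≠ 0 ∧ ∀ i, 0 ≤ (if σ i then (f i).linear v else -((f i).linear v)) := by
          rcases Nat.lt_or_ge (m + 1) n with hlt | hge
          · -- strictly fewer hyperplanes than dim : common kernel direction
            have h2 := (hGP.1 Finset.univ (by simpa using hlt.le)).2
            have hpos : 0 < Module.finrank ℝ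
                ↥(⨅ i ∈ (Finset.univ : Finset (Fin (m+1))), LinearMap.ker (f i).linear) := by
              rw [h2]
              simp only [Finset.card_univ, Fintype.card_fin]
              omega
            have hnebot : (⨅ i ∈ (Finset.univ : Finset (Fin (m+1))), LinearMap.ker (f i).linear) ≠ ⊥ := by
              intro h
              rw [h] at hpos
              simp at hpos
            obtain ⟨v, hvmem, hv0⟩ := (Submodule.ne_bot_iff _).1 hnebot
            refine ⟨v, hv0, fun i => ?_⟩
            have : (f i).linear v = 0 := by
              have := (Submodule.mem_iInf _).1 hvmem i
              have := (Submodule.mem_iInf _).1 this (Finset.mem_univ i)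
              exact LinearMap.mem_ker.1 this
            rw [this]
            cases σ i <;> simp
          · -- exactly n hyperplanes : solve for v
            have hmn : m + 1 = n := le_antisymm (by omega) hge
            set L : W →ₗ[ℝ] (Fin (m+1) → ℝ) := LinearMap.pi (fun i => (f i).linear) with hL_def
            have hkerL : LinearMap.ker L = ⊥ := by
              rw [hL_def, LinearMap.ker_pi]
              have h2 := (hGP.1 Finset.univ (by simp [hmn])).2
              have hbot : (⨅ i ∈ (Finset.univ : Finset (Fin (m+1))), LinearMap.ker (f i).linear) = ⊥ :=
                Submodule.finrank_eq_zero.1 (by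
                  rw [h2]
                  simp [hmn])
              rw [← hbot]
              ext w
              simp [Submodule.mem_iInf]
            have hinj : Function.Injective L := LinearMap.ker_eq_bot.1 hkerL
            have hsurj : Function.Surjective L :=
              (LinearMap.injective_iff_surjective_of_finrank_eq_finrank
                (by rw [hrk, Module.finrank_fin_fun, hmn])).1 hinj
            obtain ⟨v, hv⟩ := hsurj (fun i => if σ i then 1 else -1)
            refine ⟨v, ?_, fun i => ?_⟩
            · intro h
              rw [h, map_zero] at hv
              have h0 := congrFun hv 0
              cases hσ0 : σ 0 <;> rw [hσ0] at h0 <;> norm_num at h0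
            · have : (f i).linear v = if σ i then 1 else -1 := by
                have := congrFun hv i
                exact this
              rw [this]
              cases σ i <;> norm_num
        obtain ⟨v, hv0, hvsign⟩ := hesc
        refine not_isBounded_of_ray hx hv0 (fun t ht => ?_) hbσ
        intro i
        have hsi := hvsign i
        have hxi := hx i
        rw [affine_apply_smul_add]
        cases hσ : σ i
        · rw [hσ] at hsi hxi
          simp only [Bool.false_eq_true, if_false] at hsi hxi ⊢
          nlinarith
        · rw [hσ] at hsi hxi
          simp only [if_true] at hsi hxi ⊢
          nlinarith
      · -- main induction step : n ≤ m
        push_neg at hpn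
        set l := Fin.last m with hl_def
        set f' : Fin m → W →ᵃ[ℝ] ℝ := fun i => f i.castSucc with hf'_def
        have hGP' : BRGP n f' := hGP.delete
        obtain ⟨x₀, hx₀⟩ := (hGP.1 {l} (by rw [Finset.card_singleton]; exact hn1)).1
        have hx₀l : f l x₀ = 0 := hx₀ l (Finset.mem_singleton_self l)
        set a := (f l).linear with ha_def
        have hrker : Module.finrank ℝ (LinearMap.ker a) = n - 1 := by
          have h2 := (hGP.1 {l} (by rw [Finset.card_singleton]; exact hn1)).2
          rw [Finset.iInf_singleton] at h2
          simpa using h2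
        have hal : a ≠ 0 := by
          intro h
          rw [h, LinearMap.ker_zero, finrank_top, hrk] at hrker
          omega
        set e : LinearMap.ker a →ᵃ[ℝ] W :=
          AffineMap.mk' (fun v => x₀ + (v : W)) (LinearMap.ker a).subtype 0
            (by intro v; simp [add_comm]) with he_def
        set g : Fin m → (LinearMap.ker a) →ᵃ[ℝ] ℝ := fun i => (f' i).comp e with hg_def
        have hgval : ∀ (i : Fin m) (v : LinearMap.ker a), g i v = f' i (x₀ + (v : W)) := by
          intro i v
          simp [hg_def, he_def, AffineMap.comp_apply, AffineMap.coe_mk']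
        have hglin : ∀ i : Fin m, (g i).linear = (f' i).linear.comp (LinearMap.ker a).subtype := by
          intro i
          rfl
        have hlnotmem : ∀ J : Finset (Fin m), l ∉ J.map Fin.castSuccEmb := by
          intro J hmem
          obtain ⟨j, -, hj⟩ := Finset.mem_map.1 hmem
          simp only [Fin.castSuccEmb_apply] at hj
          exact absurd hj (ne_of_lt (Fin.castSucc_lt_last j))
        have hcardJ' : ∀ J : Finset (Fin m), (insert l (J.map Fin.castSuccEmb)).card = J.card + 1 := by
          intro J
          rw [Finset.card_insert_of_notMem (hlnotmem J), Finset.card_map]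
        have hxmem : ∀ x : W, f l x = 0 → x - x₀ ∈ LinearMap.ker a := by
          intro x hxl
          rw [LinearMap.mem_ker, ha_def]
          have h1 := (f l).linearMap_vsub x x₀
          simp only [vsub_eq_sub] at h1
          simp [h1, hxl, hx₀l]
        have hGPg : BRGP (n - 1) g := by
          constructor
          · intro J hJ
            have hJ'card : (insert l (J.map Fin.castSuccEmb)).card ≤ n := by
              rw [hcardJ']
              omega
            obtain ⟨⟨x, hx⟩, hrk2⟩ := hGP.1 _ hJ'card
            have hxl : f l x = 0 := hx l (Finset.mem_insert_self _ _)
            refine ⟨⟨⟨x - x₀, hxmem x hxl⟩, fun i hi => ?_⟩, ?_⟩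
            · rw [hgval]
              simp only [add_sub_cancel]
              exact hx _ (Finset.mem_insert_of_mem (Finset.mem_map_of_mem _ hi))
            · have hstep1 : (⨅ i ∈ J, LinearMap.ker (g i).linear) =
                  Submodule.comap (LinearMap.ker a).subtype
                    (⨅ i ∈ J, LinearMap.ker (f' i).linear) := by
                ext v
                simp only [Submodule.mem_iInf, Submodule.mem_comap, LinearMap.mem_ker, hglin,
                  LinearMap.comp_apply, Submodule.coe_subtype]
              set K := ⨅ i ∈ J, LinearMap.ker (f' i).linear with hK_def
              have hstep2 : Submodule.comap (LinearMap.ker a).subtype K =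
                  Submodule.comap (LinearMap.ker a).subtype (K ⊓ LinearMap.ker a) := by
                rw [Submodule.comap_inf, Submodule.comap_subtype_self, inf_top_eq]
              have hstep3 : Module.finrank ℝ
                    ↥(Submodule.comap (LinearMap.ker a).subtype (K ⊓ LinearMap.ker a)) =
                  Module.finrank ℝ ↥(K ⊓ LinearMap.ker a) :=
                (Submodule.comapSubtypeEquivOfLe inf_le_right).finrank_eq
              have hstep4 : K ⊓ LinearMap.ker a =
                  ⨅ i ∈ insert l (J.map Fin.castSuccEmb), LinearMap.ker (f i).linear := by
                rw [Finset.iInf_insert,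
                  iInf_map_castSucc (fun i => LinearMap.ker (f i).linear) J]
                rw [hK_def, inf_comm]
              rw [hstep1, hstep2, hstep3, hstep4, hrk2, hcardJ']
              omega
          · rintro J hJ ⟨v, hv⟩
            refine hGP.2 (insert l (J.map Fin.castSuccEmb)) (by rw [hcardJ']; omega)
              ⟨x₀ + (v : W), ?_⟩
            intro i hi
            rcases Finset.mem_insert.1 hi with heq | hi'
            · subst heq
              rw [affine_apply_add, hx₀l, zero_add]
              exact LinearMap.mem_ker.1 v.2
            · obtain ⟨j, hj, rfl⟩ := Finset.mem_map.1 hi'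
              have := hv j hj
              rw [hgval] at this
              simpa using this
        have hcount' := ih n W f' hrk hGP'
        have hcountg := ih (n - 1) (LinearMap.ker a) g hrker hGPg
        have hiso : ∀ S : Set (LinearMap.ker a),
            IsBounded ((fun v : LinearMap.ker a => x₀ + (v : W)) '' S) ↔ IsBounded S := by
          intro S
          constructor
          · intro h
            obtain ⟨c, hc⟩ := isBounded_iff_forall_norm_le.1 h
            refine isBounded_iff_forall_norm_le.2 ⟨c + ‖x₀‖, fun v hv => ?_⟩
            have h1 := hc _ (mem_image_of_mem _ hv)
            have h2 : ‖(v : W)‖ ≤ ‖x₀ + (v : W)‖ + ‖x₀‖ := by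
              have := norm_sub_le (x₀ + (v : W)) x₀
              simpa using this
            calc ‖v‖ = ‖(v : W)‖ := rfl
              _ ≤ ‖x₀ + (v : W)‖ + ‖x₀‖ := h2
              _ ≤ c + ‖x₀‖ := by linarith
          · intro h
            obtain ⟨c, hc⟩ := isBounded_iff_forall_norm_le.1 h
            refine isBounded_iff_forall_norm_le.2 ⟨‖x₀‖ + c, ?_⟩
            rintro y ⟨v, hv, rfl⟩
            calc ‖x₀ + (v : W)‖ ≤ ‖x₀‖ + ‖(v : W)‖ := norm_add_le _ _
              _ = ‖x₀‖ + ‖v‖ := rfl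
              _ ≤ ‖x₀‖ + c := by linarith [hc v hv]
        have hseteq : ∀ σ' : Fin m → Bool,
            (fun v : LinearMap.ker a => x₀ + (v : W)) '' BRcell g σ' =
              BRcell f' σ' ∩ {x | f l x = 0} := by
          intro σ'
          ext x
          constructor
          · rintro ⟨v, hv, rfl⟩
            refine ⟨fun i => ?_, ?_⟩
            · have := hv i
              rwa [hgval] at this
            · simp only [mem_setOf_eq]
              rw [affine_apply_add, hx₀l]
              have : (f l).linear (v : W) = 0 := v.2
              rw [this, add_zero]
          · rintro ⟨hx, hxl⟩
            refine ⟨⟨x - x₀, hxmem x hxl⟩, fun i => ?_, by simp⟩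
            rw [hgval]
            simp only [add_sub_cancel]
            exact hx i
        have himg : ∀ σ' : Fin m → Bool,
            (((BRcell g σ').Nonempty ∧ IsBounded (BRcell g σ')) ↔
            ((BRcell f' σ' ∩ {x | f l x = 0}).Nonempty ∧
              IsBounded (BRcell f' σ' ∩ {x | f l x = 0}))) := by
          intro σ'
          rw [← hseteq σ', hiso, Set.image_nonempty]
        have hkersum : ∀ w : W, w ≠ 0 → (∀ i : Fin m, (f' i).linear w = 0) → False := by
          intro w hw0 hw
          exact hGP'.noline hpn w hw0 hw
        have hsum : (Finset.univ.filter fun σ : Fin (m + 1) → Bool =>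
              (BRcell f σ).Nonempty ∧ IsBounded (BRcell f σ)).card =
            (Finset.univ.filter fun σ' : Fin m → Bool =>
              (BRcell f' σ').Nonempty ∧ IsBounded (BRcell f' σ')).card +
            (Finset.univ.filter fun σ' : Fin m → Bool =>
              (BRcell g σ').Nonempty ∧ IsBounded (BRcell g σ')).card := by
          rw [Finset.card_filter, Finset.card_filter, Finset.card_filter]
          rw [← Fintype.sum_equiv (BRsnocEquiv m)
            (fun x : (Fin m → Bool) × Bool =>
              if (BRcell f (Fin.snoc x.1 x.2)).Nonempty ∧ IsBounded (BRcell f (Fin.snoc x.1 x.2))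
                then 1 else 0)
            (fun σ : Fin (m + 1) → Bool =>
              if (BRcell f σ).Nonempty ∧ IsBounded (BRcell f σ) then 1 else 0)
            (fun x => rfl)]
          rw [Fintype.sum_prod_type]
          rw [← Finset.sum_add_distrib]
          refine Finset.sum_congr rfl fun σ' _ => ?_
          rw [Fintype.sum_bool]
          have hkey := BRkey f hal hkersum σ'
          rw [hkey]
          congr 1
          simp only [himg σ']
          rfl
        rw [hsum, hcount', hcountg]
        obtain ⟨m', rfl⟩ : ∃ m', m = m' + 1 := ⟨m - 1, by omega⟩
        obtain ⟨n', rfl⟩ : ∃ n', n = n' + 1 := ⟨n - 1, by omega⟩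
        simp only [Nat.add_sub_cancel]
        rw [Nat.choose_succ_succ' m' n']
        omega

lemma BRcell_subset [FiniteDimensional ℝ V] {p : ℕ} (f : Fin p → V →ᵃ[ℝ] ℝ)
    (σ : Fin p → Bool) : BRcell f σ ⊆ {x | ∀ i, f i x ≠ 0} := by
  intro x hx i
  have := hx i
  cases hσ : σ i <;> rw [hσ] at this <;> simp only [Bool.false_eq_true, if_false, if_true] at this
  · exact ne_of_lt this
  · exact (ne_of_lt this).symm

lemma connectedComponentIn_eq_BRcell [FiniteDimensional ℝ V] {p : ℕ}
    (f : Fin p → V →ᵃ[ℝ] ℝ) {σ : Fin p → Bool} {x : V} (hx : x ∈ BRcell f σ) :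
    connectedComponentIn {y | ∀ i, f i y ≠ 0} x = BRcell f σ := by
  set M := {y : V | ∀ i, f i y ≠ 0} with hM_def
  have hsub : BRcell f σ ⊆ M := BRcell_subset f σ
  set Wop := ⋃ i, {y : V | if σ i then f i y < 0 else 0 < f i y} with hW_def
  have hUopen : IsOpen (BRcell f σ) := isOpen_BRcell f σ
  have hWopen : IsOpen Wop := by
    refine isOpen_iUnion fun i => ?_
    cases hσ : σ i <;> simp only [hσ, Bool.false_eq_true, if_false, if_true]
    · have : {y : V | 0 < f i y} = f i ⁻¹' Ioi 0 := rfl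
      rw [this]
      exact isOpen_Ioi.preimage (f i).continuous_of_finiteDimensional
    · have : {y : V | f i y < 0} = f i ⁻¹' Iio 0 := rfl
      rw [this]
      exact isOpen_Iio.preimage (f i).continuous_of_finiteDimensional
  have hUW : ∀ z, z ∈ BRcell f σ → z ∈ Wop → False := by
    intro z hzU hzW
    obtain ⟨i, hi⟩ := mem_iUnion.1 hzW
    have h1 := hzU i
    cases hσ : σ i <;> rw [hσ] at h1 hi <;>
      simp only [Bool.false_eq_true, if_false, if_true, mem_setOf_eq] at h1 hi <;> linarith
  have hcover : connectedComponentIn M x ⊆ BRcell f σ ∪ Wop := by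
    intro y hy
    have hyM : y ∈ M := connectedComponentIn_subset _ _ hy
    by_cases hyU : y ∈ BRcell f σ
    · exact Or.inl hyU
    · right
      simp only [BRcell, mem_setOf_eq] at hyU
      push_neg at hyU
      obtain ⟨i, hi⟩ := hyU
      refine mem_iUnion.2 ⟨i, ?_⟩
      have hne := hyM i
      cases hσ : σ i <;> rw [hσ] at hi <;>
        simp only [Bool.false_eq_true, if_false, if_true, mem_setOf_eq] at hi ⊢
      · rcases hne.lt_or_gt with h | h
        · exact absurd h hi
        · exact h
      · rcases hne.lt_or_gt with h | h
        · exact h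
        · exact absurd h hi
  refine Subset.antisymm ?_
    ((convex_BRcell f σ).isPreconnected.subset_connectedComponentIn hx hsub)
  by_contra hnot
  obtain ⟨y, hy, hyU⟩ := not_subset.1 hnot
  have hyW : y ∈ Wop := (hcover hy).resolve_left hyU
  have hpc := isPreconnected_connectedComponentIn (x := x) (F := M)
  obtain ⟨z, -, hz2⟩ := hpc (BRcell f σ) Wop hUopen hWopen hcover
    ⟨x, mem_connectedComponentIn (hsub hx), hx⟩ ⟨y, hy, hyW⟩
  exact hUW z hz2.1 hz2.2

/-- The number of bounded connected components of the complement of an arrangement of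
`p` affine hyperplanes in general position in `ℝⁿ` is `C(p−1, n)`. -/
theorem bounded_regions_general_position (n p : ℕ)
    (f : Fin p → ((Fin n → ℝ) →ᵃ[ℝ] ℝ))
    (hf : ∀ i, (f i).linear ≠ 0)
    (hgen : ∀ J : Finset (Fin p), 1 ≤ J.card → J.card ≤ n →
      (∃ x, ∀ i ∈ J, f i x = 0) ∧
        Module.finrank ℝ ↥(⨅ i ∈ J, LinearMap.ker (f i).linear) = n - J.card)
    (hgen' : ∀ J : Finset (Fin p), n < J.card → ¬∃ x, ∀ i ∈ J, f i x = 0) :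
    letI M : Set (Fin n → ℝ) := {x | ∀ i, f i x ≠ 0}
    {C : Set (Fin n → ℝ) |
        (∃ x ∈ M, C = connectedComponentIn M x) ∧ Bornology.IsBounded C}.ncard =
      (p - 1).choose n := by
  classical
  have hrk : Module.finrank ℝ (Fin n → ℝ) = n := Module.finrank_fin_fun ℝ
  have hGP : BRGP n f := by
    constructor
    · intro J hJ
      rcases Nat.eq_zero_or_pos J.card with h0 | h1
      · have hJe : J = ∅ := Finset.card_eq_zero.1 h0
        subst hJe
        refine ⟨⟨0, by simp⟩, ?_⟩
        have htop : (⨅ i ∈ (∅ : Finset (Fin p)), LinearMap.ker (f i).linear) = ⊤ := by simp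
        rw [htop, finrank_top, hrk]
        simp
      · exact hgen J h1 hJ
    · exact hgen'
  have hset : {C : Set (Fin n → ℝ) |
        (∃ x ∈ {x : Fin n → ℝ | ∀ i, f i x ≠ 0},
          C = connectedComponentIn {x : Fin n → ℝ | ∀ i, f i x ≠ 0} x) ∧ IsBounded C}
      = (BRcell f) '' {σ | (BRcell f σ).Nonempty ∧ IsBounded (BRcell f σ)} := by
    ext C
    constructor
    · rintro ⟨⟨x, hxM, rfl⟩, hb⟩
      set σx : Fin p → Bool := fun i => decide (0 < f i x) with hσx_def
      have hx : x ∈ BRcell f σx := by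
        intro i
        rcases (hxM i).lt_or_gt with h | h
        · have : σx i = false := by
            simp only [hσx_def, decide_eq_false_iff_not]
            exact fun hh => absurd h (not_lt.2 hh.le)
          rw [this]
          simpa using h
        · have : σx i = true := by simp [hσx_def, h]
          rw [this]
          simpa using h
      have hcomp := connectedComponentIn_eq_BRcell f hx
      exact ⟨σx, ⟨⟨x, hx⟩, hcomp ▸ hb⟩, hcomp.symm⟩
    · rintro ⟨σ, ⟨⟨x, hx⟩, hb⟩, rfl⟩
      exact ⟨⟨x, BRcell_subset f σ hx, (connectedComponentIn_eq_BRcell f hx).symm⟩, hb⟩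
  have hinj : Set.InjOn (BRcell f)
      {σ | (BRcell f σ).Nonempty ∧ IsBounded (BRcell f σ)} := by
    intro σ₁ h₁ σ₂ _ heq
    by_contra hne
    obtain ⟨i, hi⟩ := Function.ne_iff.1 hne
    obtain ⟨x, hx⟩ := h₁.1
    have hx2 : x ∈ BRcell f σ₂ := heq ▸ hx
    have h1 := hx i
    have h2 := hx2 i
    cases hσ1 : σ₁ i <;> cases hσ2 : σ₂ i <;> rw [hσ1] at h1 hi <;> rw [hσ2] at h2 hi <;>
      simp only [Bool.false_eq_true, if_false, if_true] at h1 h2 hi <;>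
        first
        | exact hi rfl
        | linarith
  show {C : Set (Fin n → ℝ) |
        (∃ x ∈ {x : Fin n → ℝ | ∀ i, f i x ≠ 0},
          C = connectedComponentIn {x : Fin n → ℝ | ∀ i, f i x ≠ 0} x) ∧ IsBounded C}.ncard
      = (p - 1).choose n
  rw [hset, Set.ncard_image_of_injOn hinj]
  rw [Set.ncard_eq_toFinset_card', Set.toFinset_setOf]
  have := BRcount p n (Fin n → ℝ) f hrk hGP
  convert this using 2
end
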